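/- arXiv:2406.08994 — 7 statements merged into one kernel-verified Lean document; each statement's English description precedes it below -/
import Mathlib

section
/- Let J, R ∈ ℝⁿˣⁿ with J = −Jᵀ, R = Rᵀ ≥ 0, partitioned into blocks of sizes n₁, n₂ with R = diag(R₁₁, 0) where R₁₁ > 0, and J = [[J₁₁, J₁₂],[−J₁₂ᵀ, J₂₂]]. Then J − R is nonsingular if and only if rank [ −J₁₂ᵀ , J₂₂ ] = n₂. -/
open Matrix

private lemma rank_eq_card_iff_vecMul_inj {m : ℕ} {n : Type*} [Fintype n] (M : Matrix (Fin m) n ℝ) :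
    M.rank = m ↔ Function.Injective M.vecMul := by
  rw [Matrix.vecMul_injective_iff]
  constructor
  · intro h
    rw [linearIndependent_iff_card_eq_finrank_span, Fintype.card_fin, Set.finrank,
      ← Matrix.rank_eq_finrank_span_row, h]
  · intro h
    exact h.rank_matrix.trans (Fintype.card_fin m)

private lemma skew_quad {k : ℕ} {S : Matrix (Fin k) (Fin k) ℝ} (hS : Sᵀ = -S)
    (x : Fin k → ℝ) : x ⬝ᵥ S *ᵥ x = 0 := by
  have h1 : x ⬝ᵥ S *ᵥ x = -(x ⬝ᵥ S *ᵥ x) := by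
    conv_lhs => rw [dotProduct_mulVec, ← mulVec_transpose, hS, neg_mulVec, neg_dotProduct,
      dotProduct_comm]
  linarith

/-- Lemma 2.1 (ii): J - R is nonsingular iff rank [-J₁₂ᵀ, J₂₂] = n₂. -/
theorem JminusR_nonsingular_iff_rank
    {n₁ n₂ : ℕ}
    (J₁₁ : Matrix (Fin n₁) (Fin n₁) ℝ) (J₁₂ : Matrix (Fin n₁) (Fin n₂) ℝ)
    (J₂₂ : Matrix (Fin n₂) (Fin n₂) ℝ)
    (R₁₁ : Matrix (Fin n₁) (Fin n₁) ℝ)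
    (J : Matrix (Fin n₁ ⊕ Fin n₂) (Fin n₁ ⊕ Fin n₂) ℝ)
    (R : Matrix (Fin n₁ ⊕ Fin n₂) (Fin n₁ ⊕ Fin n₂) ℝ)
    (hJdef : J = fromBlocks J₁₁ J₁₂ (-J₁₂ᵀ) J₂₂)
    (hRdef : R = fromBlocks R₁₁ 0 0 0)
    (hJ : Jᵀ = -J) (hR : R.PosSemidef) (hR11 : R₁₁.PosDef) :
    IsUnit (J - R) ↔ (fromCols (-J₁₂ᵀ) J₂₂).rank = n₂ := by
  -- extract skewness of diagonal blocks
  rw [hJdef, fromBlocks_transpose, fromBlocks_neg, fromBlocks_inj] at hJ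
  obtain ⟨hJ11, -, -, hJ22⟩ := hJ
  -- block form of J - R
  have hA : J - R = fromBlocks (J₁₁ - R₁₁) J₁₂ (-J₁₂ᵀ) J₂₂ := by
    rw [hJdef, hRdef]
    ext i j
    cases i <;> cases j <;> simp [fromBlocks, Matrix.sub_apply]
  -- vecMul of the column-concatenated matrix
  have hM : ∀ v : Fin n₂ → ℝ,
      v ᵥ* (fromCols (-J₁₂ᵀ) J₂₂) = Sum.elim (-(J₁₂ *ᵥ v)) (-(J₂₂ *ᵥ v)) := by
    intro v
    have h2 : v ᵥ* J₂₂ = -(J₂₂ *ᵥ v) := by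
      rw [← mulVec_transpose, hJ22, neg_mulVec]
    rw [vecMul_fromCols, Matrix.vecMul_neg, vecMul_transpose, h2]
  -- reduce to kernel conditions
  have kmul : IsUnit (J - R) ↔ ∀ v, (J - R) *ᵥ v = 0 → v = 0 := by
    rw [← Matrix.mulVec_injective_iff_isUnit, ← coe_mulVecLin]
    exact injective_iff_map_eq_zero _
  have kvec : (fromCols (-J₁₂ᵀ) J₂₂).rank = n₂ ↔
      ∀ v, v ᵥ* (fromCols (-J₁₂ᵀ) J₂₂) = 0 → v = 0 := by
    rw [rank_eq_card_iff_vecMul_inj, ← coe_vecMulLinear]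
    exact injective_iff_map_eq_zero _
  rw [kmul, kvec]
  constructor
  · intro h v hv
    rw [hM v] at hv
    have h1 : J₁₂ *ᵥ v = 0 := by
      funext i
      have := congrFun hv (Sum.inl i)
      simpa [neg_eq_zero] using this
    have h2 : J₂₂ *ᵥ v = 0 := by
      funext i
      have := congrFun hv (Sum.inr i)
      simpa [neg_eq_zero] using this
    have h0 : (J - R) *ᵥ (Sum.elim 0 v) = 0 := by
      rw [hA, fromBlocks_mulVec]
      simp [h1, h2]
    have := h _ h0
    funext i
    exact congrFun this (Sum.inr i)
  · intro h v hv
    set x₁ : Fin n₁ → ℝ := v ∘ Sum.inl with hx₁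
    set x₂ : Fin n₂ → ℝ := v ∘ Sum.inr with hx₂
    have hv' : v = Sum.elim x₁ x₂ := by
      funext i; cases i <;> rfl
    rw [hv', hA, fromBlocks_mulVec] at hv
    have e1 : (J₁₁ - R₁₁) *ᵥ x₁ + J₁₂ *ᵥ x₂ = 0 := by
      funext i; exact congrFun hv (Sum.inl i)
    have e2 : (-J₁₂ᵀ) *ᵥ x₁ + J₂₂ *ᵥ x₂ = 0 := by
      funext i; exact congrFun hv (Sum.inr i)
    -- quadratic form computation
    have q1 : x₁ ⬝ᵥ ((J₁₁ - R₁₁) *ᵥ x₁ + J₁₂ *ᵥ x₂) = 0 := by rw [e1, dotProduct_zero]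
    have q2 : x₂ ⬝ᵥ ((-J₁₂ᵀ) *ᵥ x₁ + J₂₂ *ᵥ x₂) = 0 := by rw [e2, dotProduct_zero]
    have s1 : x₁ ⬝ᵥ J₁₁ *ᵥ x₁ = 0 := skew_quad hJ11 x₁
    have s2 : x₂ ⬝ᵥ J₂₂ *ᵥ x₂ = 0 := skew_quad hJ22 x₂
    have cross : x₁ ⬝ᵥ J₁₂ *ᵥ x₂ = x₂ ⬝ᵥ J₁₂ᵀ *ᵥ x₁ := by
      rw [dotProduct_mulVec, ← mulVec_transpose, dotProduct_comm]
    rw [dotProduct_add, sub_mulVec, dotProduct_sub, s1] at q1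
    rw [dotProduct_add, neg_mulVec, dotProduct_neg, s2] at q2
    have hq : x₁ ⬝ᵥ R₁₁ *ᵥ x₁ = 0 := by
      rw [cross] at q1
      linarith
    have hx1 : x₁ = 0 := by
      by_contra hne
      have := hR11.dotProduct_mulVec_pos hne
      simp only [star_trivial] at this
      rw [hq] at this
      exact lt_irrefl 0 this
    have h1 : J₁₂ *ᵥ x₂ = 0 := by
      rw [hx1] at e1
      simpa using e1
    have h2 : J₂₂ *ᵥ x₂ = 0 := by
      rw [hx1] at e2
      simpa using e2
    have hx2 : x₂ = 0 := by
      apply h x₂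
      rw [hM x₂, h1, h2]
      simp
    rw [hv', hx1, hx2]
    simp
end

section
/- Let E, J, R ∈ ℝⁿˣⁿ and B ∈ ℝⁿˣᵐ with E = Eᵀ ≥ 0, J = −Jᵀ, R = Rᵀ ≥ 0. Suppose rank [ sE − (J−R) , B ] = n for all s on the imaginary axis. Let F ∈ ℝᵐˣⁿ be such that R̃ := R − ½(BF + FᵀBᵀ) ≥ 0 and rank R̃ = rank [R, B]. Then the pencil sE − (J − R + BF) has all its finite eigenvalues in the open left half plane. -/
open Matrix

/-- Complexification of a real matrix. -/
noncomputable def cm {a b : Type*} (M : Matrix a b ℝ) : Matrix a b ℂ :=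
  M.map (algebraMap ℝ ℂ)

lemma cm_conjTranspose {a b : Type*} (M : Matrix a b ℝ) : (cm M)ᴴ = cm Mᵀ := by
  ext i j; simp [cm, conjTranspose_apply]

lemma cm_add {a b : Type*} (M N : Matrix a b ℝ) : cm (M + N) = cm M + cm N := by
  ext i j; simp [cm]

lemma cm_sub {a b : Type*} (M N : Matrix a b ℝ) : cm (M - N) = cm M - cm N := by
  ext i j; simp [cm]

lemma cm_neg {a b : Type*} (M : Matrix a b ℝ) : cm (-M) = -cm M := by
  ext i j; simp [cm]

lemma cm_mul {a b c : Type*} [Fintype b] (M : Matrix a b ℝ) (N : Matrix b c ℝ) :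
    cm (M * N) = cm M * cm N := by
  ext i j; simp [cm, mul_apply]

open ComplexOrder in
lemma cm_posSemidef {n : Type*} [Fintype n] [DecidableEq n] {M : Matrix n n ℝ}
    (h : M.PosSemidef) : (cm M).PosSemidef := by
  obtain ⟨A, hA⟩ : ∃ A : Matrix n n ℝ, M = Aᴴ * A := by
    open scoped MatrixOrder in
    obtain ⟨X, hX, -, hXX⟩ := CFC.exists_sqrt_of_isSelfAdjoint_of_quasispectrumRestricts
      h.isHermitian (QuasispectrumRestricts.nnreal_of_nonneg h.nonneg)
    exact ⟨X, by rw [← hXX, ← star_eq_conjTranspose, hX.star_eq]⟩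
  have h2 : cm M = (cm A)ᴴ * cm A := by
    have hAA : Aᴴ = Aᵀ := by ext i j; simp [conjTranspose_apply]
    rw [hA, cm_mul, cm_conjTranspose, hAA]
  rw [h2]
  exact posSemidef_conjTranspose_mul_self _

lemma cm_mulVec_apply {a b : Type*} [Fintype b] (M : Matrix a b ℝ) (x : b → ℂ) (i : a) :
    (cm M *ᵥ x) i = Complex.mk ((M *ᵥ fun j => (x j).re) i) ((M *ᵥ fun j => (x j).im) i) := by
  apply Complex.ext <;>
  simp [cm, mulVec, dotProduct, Complex.re_sum, Complex.im_sum, Complex.mul_re, Complex.mul_im]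

lemma cm_mulVec_eq_zero_iff {a b : Type*} [Fintype b] (M : Matrix a b ℝ) (x : b → ℂ) :
    cm M *ᵥ x = 0 ↔ (M *ᵥ fun j => (x j).re) = 0 ∧ (M *ᵥ fun j => (x j).im) = 0 := by
  constructor
  · intro h
    have key : ∀ i, (M *ᵥ fun j => (x j).re) i = 0 ∧ (M *ᵥ fun j => (x j).im) i = 0 := by
      intro i
      have := congrFun h i
      rw [cm_mulVec_apply] at this
      simpa [Complex.ext_iff] using this
    exact ⟨funext fun i => (key i).1, funext fun i => (key i).2⟩
  · intro ⟨h1, h2⟩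
    funext i
    rw [cm_mulVec_apply, congrFun h1 i, congrFun h2 i]
    simp [Complex.ext_iff]

lemma cm_mulVec_star {a b : Type*} [Fintype b] (M : Matrix a b ℝ) (x : b → ℂ) :
    cm M *ᵥ star x = star (cm M *ᵥ x) := by
  funext i
  simp only [cm, mulVec, dotProduct, Pi.star_apply, star_sum]
  congr 1; funext j
  simp [_root_.map_mul, Complex.conj_ofReal]

lemma conj_quadForm {n : Type*} [Fintype n] (M : Matrix n n ℂ) (x : n → ℂ) :
    star (star x ⬝ᵥ M *ᵥ x) = star x ⬝ᵥ Mᴴ *ᵥ x := by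
  rw [← star_dotProduct_star, star_star, star_mulVec, ← dotProduct_mulVec]

lemma skew_re_zero {n : Type*} [Fintype n] {M : Matrix n n ℝ} (hM : Mᵀ = -M) (x : n → ℂ) :
    (star x ⬝ᵥ cm M *ᵥ x).re = 0 := by
  have h := conj_quadForm (cm M) x
  rw [cm_conjTranspose, hM, cm_neg, neg_mulVec, dotProduct_neg] at h
  have := congrArg Complex.re h
  simp only [Complex.star_def, Complex.conj_re, Complex.neg_re] at this
  linarith

lemma mulVec_inj_of_rank {K : Type*} [Field K] {p q : Type*} [Fintype p] [Fintype q]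
    {M : Matrix p q K} (h : M.rank = Fintype.card q) {v : q → K} (hv : M *ᵥ v = 0) : v = 0 := by
  have hrn := LinearMap.finrank_range_add_finrank_ker M.mulVecLin
  rw [Module.finrank_pi] at hrn
  have hk : Module.finrank K (LinearMap.ker M.mulVecLin) = 0 := by
    have : M.rank = Module.finrank K (LinearMap.range M.mulVecLin) := rfl
    omega
  have hbot : LinearMap.ker M.mulVecLin = ⊥ := Submodule.finrank_eq_zero.mp hk
  have hmem : v ∈ LinearMap.ker M.mulVecLin := by
    simpa [LinearMap.mem_ker, mulVecLin_apply] using hv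
  rw [hbot] at hmem
  simpa using hmem

lemma ker_Rt {n m : ℕ}
    (R : Matrix (Fin n) (Fin n) ℝ) (B : Matrix (Fin n) (Fin m) ℝ)
    (F : Matrix (Fin m) (Fin n) ℝ)
    (hRsym : Rᵀ = R)
    (hRt : (R - (1 / 2 : ℝ) • (B * F + Fᵀ * Bᵀ)).PosSemidef)
    (hrank : (R - (1 / 2 : ℝ) • (B * F + Fᵀ * Bᵀ)).rank = (fromCols R B).rank)
    (v : Fin n → ℝ) (hv : (R - (1 / 2 : ℝ) • (B * F + Fᵀ * Bᵀ)) *ᵥ v = 0) :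
    R *ᵥ v = 0 ∧ Bᵀ *ᵥ v = 0 := by
  set Rt := R - (1 / 2 : ℝ) • (B * F + Fᵀ * Bᵀ) with hRtdef
  set K := (fromCols R B)ᵀ with hK
  have hKmul : ∀ w : Fin n → ℝ, K *ᵥ w = Sum.elim (Rᵀ *ᵥ w) (Bᵀ *ᵥ w) := by
    intro w; rw [hK, transpose_fromCols, fromRows_mulVec]
  have hle : LinearMap.ker K.mulVecLin ≤ LinearMap.ker Rt.mulVecLin := by
    intro w hw
    simp only [LinearMap.mem_ker, mulVecLin_apply] at hw ⊢
    rw [hKmul w] at hw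
    have hRw : R *ᵥ w = 0 := by
      have := congrArg (fun f => f ∘ Sum.inl) hw
      rw [hRsym] at this
      funext i; exact congrFun this i
    have hBw : Bᵀ *ᵥ w = 0 := by
      have := congrArg (fun f => f ∘ Sum.inr) hw
      funext i; exact congrFun this i
    have hwB : w ᵥ* B = 0 := by rw [← mulVec_transpose]; exact hBw
    have hq : w ⬝ᵥ Rt *ᵥ w = 0 := by
      rw [hRtdef]
      simp only [sub_mulVec, smul_mulVec, add_mulVec, dotProduct_sub, dotProduct_smul,
        dotProduct_add, hRw, dotProduct_zero]
      rw [← mulVec_mulVec, ← mulVec_mulVec, dotProduct_mulVec w B, hwB,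
        dotProduct_mulVec w Fᵀ, hBw]
      simp
    exact (hRt.dotProduct_mulVec_zero_iff w).mp (by simpa using hq)
  have hrankK : K.rank = Rt.rank := by
    rw [hK, rank_transpose, ← hrank]
  have hd1 := LinearMap.finrank_range_add_finrank_ker K.mulVecLin
  have hd2 := LinearMap.finrank_range_add_finrank_ker Rt.mulVecLin
  rw [Module.finrank_pi] at hd1 hd2
  have e1 : K.rank = Module.finrank ℝ (LinearMap.range K.mulVecLin) := rfl
  have e2 : Rt.rank = Module.finrank ℝ (LinearMap.range Rt.mulVecLin) := rfl
  have hfr : Module.finrank ℝ (LinearMap.ker K.mulVecLin)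
      = Module.finrank ℝ (LinearMap.ker Rt.mulVecLin) := by omega
  have hkereq : LinearMap.ker K.mulVecLin = LinearMap.ker Rt.mulVecLin :=
    Submodule.eq_of_le_of_finrank_eq hle hfr
  have hmem : v ∈ LinearMap.ker K.mulVecLin := by
    rw [hkereq]
    simpa [LinearMap.mem_ker, mulVecLin_apply] using hv
  simp only [LinearMap.mem_ker, mulVecLin_apply] at hmem
  rw [hKmul v, hRsym] at hmem
  constructor
  · funext i; exact congrFun hmem (Sum.inl i)
  · funext i; exact congrFun hmem (Sum.inr i)

open ComplexOrder

/-- Lemma 2.2: stabilization by a structure-preserving feedback. -/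
theorem feedback_asymptotic_stability
    {n m : ℕ}
    (E J R : Matrix (Fin n) (Fin n) ℝ) (B : Matrix (Fin n) (Fin m) ℝ)
    (hE : E.PosSemidef) (hJ : Jᵀ = -J) (hR : R.PosSemidef)
    (hstab : ∀ s : ℂ, s.re = 0 →
      (fromCols (s • cm E - cm (J - R)) (cm B)).rank = n)
    (F : Matrix (Fin m) (Fin n) ℝ)
    (hRt : (R - (1 / 2 : ℝ) • (B * F + Fᵀ * Bᵀ)).PosSemidef)
    (hrank : (R - (1 / 2 : ℝ) • (B * F + Fᵀ * Bᵀ)).rank = (fromCols R B).rank) :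
    ∀ s : ℂ, (s • cm E - cm (J - R + B * F)).det = 0 → s.re < 0 := by
  intro lam hdet
  by_contra hcon
  push_neg at hcon
  classical
  obtain ⟨x, hx0, hxe⟩ := Matrix.exists_mulVec_eq_zero_iff.mpr hdet
  have hRsym : Rᵀ = R := by
    have h1 := hR.1
    have h2 : Rᴴ = Rᵀ := by ext i j; simp [conjTranspose_apply]
    rw [← h2, h1]
  have hEsym : Eᵀ = E := by
    have h1 := hE.1
    have h2 : Eᴴ = Eᵀ := by ext i j; simp [conjTranspose_apply]
    rw [← h2, h1]
  set Rt : Matrix (Fin n) (Fin n) ℝ := R - (1 / 2 : ℝ) • (B * F + Fᵀ * Bᵀ) with hRtdef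
  set Jt : Matrix (Fin n) (Fin n) ℝ := J + (1 / 2 : ℝ) • (B * F - Fᵀ * Bᵀ) with hJtdef
  have hsplit : J - R + B * F = Jt - Rt := by
    rw [hJtdef, hRtdef]; module
  have hJtskew : Jtᵀ = -Jt := by
    rw [hJtdef]
    rw [transpose_add, transpose_smul, transpose_sub, transpose_mul, transpose_mul,
      transpose_transpose, transpose_transpose, hJ]
    module
  -- the eigen-equation
  have heq : lam • (cm E *ᵥ x) = cm (J - R + B * F) *ᵥ x := by
    rw [sub_mulVec, smul_mulVec] at hxe
    exact sub_eq_zero.mp hxe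
  -- quadratic forms
  set e : ℂ := star x ⬝ᵥ cm E *ᵥ x with he_def
  set rt : ℂ := star x ⬝ᵥ cm Rt *ᵥ x with hrt_def
  have he := (cm_posSemidef hE).dotProduct_mulVec_nonneg x
  have hrtnn := (cm_posSemidef hRt).dotProduct_mulVec_nonneg x
  rw [← he_def] at he
  rw [← hrt_def] at hrtnn
  have heRe : 0 ≤ e.re ∧ e.im = 0 := by
    obtain ⟨h1, h2⟩ := Complex.le_def.mp he
    exact ⟨by simpa using h1, by simpa using h2.symm⟩
  have hrtRe : 0 ≤ rt.re ∧ rt.im = 0 := by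
    obtain ⟨h1, h2⟩ := Complex.le_def.mp hrtnn
    exact ⟨by simpa using h1, by simpa using h2.symm⟩
  -- scalar equation: lam * e + rt = (skew part)
  have hscal : lam * e + rt = star x ⬝ᵥ cm Jt *ᵥ x := by
    have h1 : star x ⬝ᵥ (lam • (cm E *ᵥ x)) = star x ⬝ᵥ (cm (J - R + B * F) *ᵥ x) := by
      rw [heq]
    rw [dotProduct_smul, hsplit, cm_sub, sub_mulVec, dotProduct_sub] at h1
    rw [he_def, hrt_def]
    rw [smul_eq_mul] at h1
    linear_combination h1
  have hjt := skew_re_zero hJtskew x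
  have hre : lam.re * e.re + rt.re = 0 := by
    have := congrArg Complex.re hscal
    rw [hjt] at this
    simp only [Complex.add_re, Complex.mul_re, heRe.2] at this
    linarith
  have hprod0 : lam.re * e.re = 0 ∧ rt.re = 0 := by
    constructor <;> nlinarith [mul_nonneg hcon heRe.1, hrtRe.1]
  -- Rt x = 0
  have hrt0 : rt = 0 := Complex.ext hprod0.2 hrtRe.2
  have hRtx : cm Rt *ᵥ x = 0 := by
    rw [← (cm_posSemidef hRt).dotProduct_mulVec_zero_iff x, ← hrt_def]
    exact hrt0
  -- real and imaginary parts
  obtain ⟨hRtre, hRtim⟩ := (cm_mulVec_eq_zero_iff Rt x).mp hRtx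
  obtain ⟨hRre, hBre⟩ := ker_Rt R B F hRsym hRt hrank _ hRtre
  obtain ⟨hRim, hBim⟩ := ker_Rt R B F hRsym hRt hrank _ hRtim
  -- B*F kills re and im parts
  have hBFre : (B * F) *ᵥ (fun j => (x j).re) = 0 := by
    have hFB : (Fᵀ * Bᵀ) *ᵥ (fun j => (x j).re) = 0 := by
      rw [← mulVec_mulVec, hBre, mulVec_zero]
    have h := hRtre
    rw [hRtdef, sub_mulVec, smul_mulVec, add_mulVec, hRre, hFB] at h
    simp only [add_zero, zero_sub, neg_eq_zero, smul_eq_zero] at h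
    rcases h with h | h
    · norm_num at h
    · exact h
  have hBFim : (B * F) *ᵥ (fun j => (x j).im) = 0 := by
    have hFB : (Fᵀ * Bᵀ) *ᵥ (fun j => (x j).im) = 0 := by
      rw [← mulVec_mulVec, hBim, mulVec_zero]
    have h := hRtim
    rw [hRtdef, sub_mulVec, smul_mulVec, add_mulVec, hRim, hFB] at h
    simp only [add_zero, zero_sub, neg_eq_zero, smul_eq_zero] at h
    rcases h with h | h
    · norm_num at h
    · exact h
  have hRx : cm R *ᵥ x = 0 := (cm_mulVec_eq_zero_iff R x).mpr ⟨hRre, hRim⟩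
  have hBtx : cm Bᵀ *ᵥ x = 0 := (cm_mulVec_eq_zero_iff Bᵀ x).mpr ⟨hBre, hBim⟩
  have hBFx : cm (B * F) *ᵥ x = 0 := (cm_mulVec_eq_zero_iff (B * F) x).mpr ⟨hBFre, hBFim⟩
  -- reduced eigen-equation
  have heq2 : lam • (cm E *ᵥ x) = cm J *ᵥ x := by
    have : cm (J - R + B * F) = cm J - cm R + cm (B * F) := by
      rw [cm_add, cm_sub]
    rw [heq, this, add_mulVec, sub_mulVec, hRx, hBFx]
    simp
  -- E-part vanishes against lam.re
  have hE0 : (lam.re : ℂ) • (cm E *ᵥ x) = 0 := by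
    rcases eq_or_lt_of_le hcon with h | h
    · rw [← h]; simp
    · have he0 : e.re = 0 := by
        rcases mul_eq_zero.mp hprod0.1 with h' | h'
        · linarith
        · exact h'
      have : e = 0 := Complex.ext he0 heRe.2
      have hEx : cm E *ᵥ x = 0 := by
        rw [← (cm_posSemidef hE).dotProduct_mulVec_zero_iff x, ← he_def]
        exact this
      rw [hEx, smul_zero]
  -- the purely imaginary shift
  set s₀ : ℂ := ⟨0, -lam.im⟩ with hs₀
  have hs₀re : s₀.re = 0 := rfl
  have hN := hstab s₀ hs₀re
  have hclaim : s₀ • (cm E *ᵥ x) + cm J *ᵥ x = 0 := by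
    rw [← heq2, ← add_smul]
    have hsum : s₀ + lam = (lam.re : ℂ) := by
      apply Complex.ext <;> simp [hs₀]
    rw [hsum, hE0]
  -- kernel vector for the conjugate transpose
  set N : Matrix (Fin n) (Fin n ⊕ Fin m) ℂ :=
    fromCols (s₀ • cm E - cm (J - R)) (cm B) with hNdef
  have hstar_s₀ : star s₀ = -s₀ := by
    apply Complex.ext <;> simp [hs₀, Complex.star_def]
  have hNH : Nᴴ *ᵥ star x = 0 := by
    rw [hNdef, conjTranspose_fromCols_eq_fromRows_conjTranspose, fromRows_mulVec]
    have h2 : (cm B)ᴴ *ᵥ star x = 0 := by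
      rw [cm_conjTranspose, cm_mulVec_star, hBtx, star_zero]
    have h1 : (s₀ • cm E - cm (J - R))ᴴ *ᵥ star x = 0 := by
      have hct : (s₀ • cm E - cm (J - R))ᴴ = -s₀ • cm E - (-(cm J) - cm R) := by
        rw [conjTranspose_sub, conjTranspose_smul, hstar_s₀, cm_conjTranspose,
          cm_conjTranspose, hEsym, transpose_sub, hJ, hRsym, cm_sub, cm_neg]
      rw [hct, sub_mulVec, sub_mulVec, neg_mulVec, smul_mulVec,
        cm_mulVec_star, cm_mulVec_star, cm_mulVec_star, hRx, star_zero]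
      rw [show (-s₀) • star (cm E *ᵥ x) = star (s₀ • (cm E *ᵥ x)) by
        rw [star_smul, hstar_s₀]]
      simp only [sub_zero, sub_neg_eq_add]
      rw [← star_add, hclaim, star_zero]
    rw [h1, h2]
    ext (i | i) <;> simp
  have hrankNH : Nᴴ.rank = Fintype.card (Fin n) := by
    rw [rank_conjTranspose, hN, Fintype.card_fin]
  have hxstar : star x = 0 := mulVec_inj_of_rank hrankNH hNH
  apply hx0
  have := congrArg star hxstar
  rwa [star_star, star_zero] at this
end

section
/- Let E, J, R ∈ ℝⁿˣⁿ and B ∈ ℝⁿˣᵐ with E = Eᵀ ≥ 0, J = −Jᵀ, R = Rᵀ ≥ 0. Suppose rank [ E , (J−R)S∞(E) , B ] = n, where S∞(E) is a matrix whose columns form an orthonormal basis of the kernel of E. Let F ∈ ℝᵐˣⁿ satisfy R̃ := R − ½(BF + FᵀBᵀ) ≥ 0 and rank R̃ = rank [R, B]. Then the pencil sE − (J − R + BF) is regular and of index at most one. -/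
open Matrix

open Polynomial

-- aux: skew dot
lemma aux_skew_dot {n' : ℕ} {S : Matrix (Fin n') (Fin n') ℝ} (hS : Sᵀ = -S) (x : Fin n' → ℝ) :
    x ⬝ᵥ S *ᵥ x = 0 := by
  have h : x ⬝ᵥ S *ᵥ x = - (x ⬝ᵥ S *ᵥ x) := by
    conv_lhs => rw [dotProduct_mulVec, ← mulVec_transpose, hS, neg_mulVec,
      neg_dotProduct, dotProduct_comm]
  linarith

-- aux: triple product
lemma aux_triple {n' q : ℕ} (W : Matrix (Fin n') (Fin q) ℝ) (M : Matrix (Fin n') (Fin n') ℝ)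
    (z : Fin q → ℝ) :
    z ⬝ᵥ ((Wᵀ * M * W) *ᵥ z) = (W *ᵥ z) ⬝ᵥ (M *ᵥ (W *ᵥ z)) := by
  rw [Matrix.mul_assoc, ← mulVec_mulVec, dotProduct_mulVec, vecMul_transpose, mulVec_mulVec]

-- aux: psd zero
lemma aux_psd_zero {n' : ℕ} {N : Matrix (Fin n') (Fin n') ℝ} (h : N.PosSemidef)
    {x : Fin n' → ℝ} (hx : x ⬝ᵥ N *ᵥ x = 0) : N *ᵥ x = 0 :=
  (h.dotProduct_mulVec_zero_iff x).mp (by simpa using hx)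

-- aux: full row rank
lemma aux_fullRank_inj {n' : ℕ} {ι : Type*} [Fintype ι] (M : Matrix (Fin n') ι ℝ)
    (h : M.rank = n') {x : Fin n' → ℝ} (hx : Mᵀ *ᵥ x = 0) : x = 0 := by
  have hrt : Module.finrank ℝ (LinearMap.range Mᵀ.mulVecLin) = n' := by
    have : Mᵀ.rank = n' := by rw [Matrix.rank_transpose, h]
    exact this
  have h1 := LinearMap.finrank_range_add_finrank_ker Mᵀ.mulVecLin
  rw [Module.finrank_pi, Fintype.card_fin] at h1
  have hker : LinearMap.ker Mᵀ.mulVecLin = ⊥ := by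
    apply Submodule.finrank_eq_zero.mp
    omega
  have hm : x ∈ LinearMap.ker Mᵀ.mulVecLin := by
    rw [LinearMap.mem_ker, Matrix.mulVecLin_apply]; exact hx
  rw [hker] at hm
  simpa using hm

/-- Lemma 2.3: regularization and index reduction by a structure-preserving
feedback. -/
theorem feedback_regular_index_one
    {n m k : ℕ}
    (E J R : Matrix (Fin n) (Fin n) ℝ) (B : Matrix (Fin n) (Fin m) ℝ)
    (hE : E.PosSemidef) (hJ : Jᵀ = -J) (hR : R.PosSemidef)
    -- KE : column-orthonormal basis of the kernel of E
    (KE : Matrix (Fin n) (Fin k) ℝ)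
    (hKEorth : KEᵀ * KE = 1)
    (hKEker : LinearMap.range KE.mulVecLin = LinearMap.ker E.mulVecLin)
    (hindex : (fromCols (fromCols E ((J - R) * KE)) B).rank = n)
    (F : Matrix (Fin m) (Fin n) ℝ)
    (hRt : (R - (1 / 2 : ℝ) • (B * F + Fᵀ * Bᵀ)).PosSemidef)
    (hrank : (R - (1 / 2 : ℝ) • (B * F + Fᵀ * Bᵀ)).rank = (fromCols R B).rank) :
    (Matrix.det ((Polynomial.X : Polynomial ℝ) • E.map Polynomial.C
        - (J - R + B * F).map Polynomial.C)) ≠ 0 ∧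
    (Matrix.det ((Polynomial.X : Polynomial ℝ) • E.map Polynomial.C
        - (J - R + B * F).map Polynomial.C)).natDegree = E.rank := by
  classical
  set A : Matrix (Fin n) (Fin n) ℝ := J - R + B * F with hAdef
  set Rt : Matrix (Fin n) (Fin n) ℝ := R - (1 / 2 : ℝ) • (B * F + Fᵀ * Bᵀ) with hRtdef
  -- symmetry facts
  have hEsymm : Eᵀ = E := (conjTranspose_eq_transpose_of_trivial E).symm.trans hE.1
  have hRsymm : Rᵀ = R := (conjTranspose_eq_transpose_of_trivial R).symm.trans hR.1
  -- KE facts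
  have hKEsec : ∀ z : Fin k → ℝ, KEᵀ *ᵥ (KE *ᵥ z) = z := by
    intro z; rw [mulVec_mulVec, hKEorth, one_mulVec]
  have hkermem : ∀ x : Fin n → ℝ, x ∈ LinearMap.ker E.mulVecLin ↔ E *ᵥ x = 0 := by
    intro x; rw [LinearMap.mem_ker, Matrix.mulVecLin_apply]
  have hEKEv : ∀ z : Fin k → ℝ, E *ᵥ (KE *ᵥ z) = 0 := by
    intro z
    have : KE *ᵥ z ∈ LinearMap.range KE.mulVecLin := ⟨z, rfl⟩
    rw [hKEker, hkermem] at this; exact this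
  have hEKE : E * KE = 0 := by
    ext i j
    have h1 := congrFun (hEKEv (Pi.single j 1)) i
    rw [mulVec_mulVec, mulVec_single] at h1
    simpa using h1
  have hKEtE : KEᵀ * E = 0 := by
    have h1 : (E * KE)ᵀ = 0 := by rw [hEKE, transpose_zero]
    rwa [transpose_mul, hEsymm] at h1
  -- dimension count
  have hKEinj : ∀ z : Fin k → ℝ, KE *ᵥ z = 0 → z = 0 := by
    intro z hz
    have := congrArg (fun v => KEᵀ *ᵥ v) hz
    simpa [hKEsec z] using this
  have hkerdim : Module.finrank ℝ (LinearMap.ker E.mulVecLin) = k := by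
    rw [← hKEker, LinearMap.finrank_range_of_inj, Module.finrank_pi, Fintype.card_fin]
    intro a b hab
    have h1 : KE *ᵥ (a - b) = 0 := by
      rw [Matrix.mulVec_sub]
      simp only [Matrix.mulVecLin_apply] at hab
      rw [hab, sub_self]
    have := hKEinj _ h1
    exact sub_eq_zero.mp this
  have hrksum : E.rank + k = n := by
    have h1 := LinearMap.finrank_range_add_finrank_ker E.mulVecLin
    rw [hkerdim, Module.finrank_pi, Fintype.card_fin] at h1
    exact h1
  -- kernel of Rt
  have hRtker : ∀ x : Fin n → ℝ, Rt *ᵥ x = 0 → R *ᵥ x = 0 ∧ Bᵀ *ᵥ x = 0 := by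
    have hle : LinearMap.ker ((fromCols R B)ᵀ.mulVecLin) ≤ LinearMap.ker Rt.mulVecLin := by
      intro x hx
      rw [LinearMap.mem_ker, Matrix.mulVecLin_apply] at hx ⊢
      rw [transpose_fromCols, fromRows_mulVec] at hx
      have hRx : Rᵀ *ᵥ x = 0 := funext fun i => congrFun hx (Sum.inl i)
      have hBx : Bᵀ *ᵥ x = 0 := funext fun i => congrFun hx (Sum.inr i)
      rw [hRsymm] at hRx
      have h1 : Rt *ᵥ x = - ((1/2 : ℝ) • (B *ᵥ (F *ᵥ x))) := by
        rw [hRtdef, Matrix.sub_mulVec, smul_mulVec, Matrix.add_mulVec,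
          ← mulVec_mulVec, ← mulVec_mulVec, hRx, hBx, mulVec_zero, add_zero, zero_sub]
      have h2 : x ⬝ᵥ Rt *ᵥ x = 0 := by
        rw [h1, dotProduct_neg, dotProduct_smul, dotProduct_mulVec, ← mulVec_transpose, hBx]
        simp
      exact aux_psd_zero hRt h2
    have hd1 := LinearMap.finrank_range_add_finrank_ker Rt.mulVecLin
    have hd2 := LinearMap.finrank_range_add_finrank_ker ((fromCols R B)ᵀ.mulVecLin)
    rw [Module.finrank_pi, Fintype.card_fin] at hd1 hd2
    have hr1 : Module.finrank ℝ (LinearMap.range Rt.mulVecLin) = Rt.rank := rfl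
    have hr2 : Module.finrank ℝ (LinearMap.range ((fromCols R B)ᵀ.mulVecLin))
        = (fromCols R B)ᵀ.rank := rfl
    have hr3 : (fromCols R B)ᵀ.rank = (fromCols R B).rank := Matrix.rank_transpose _
    rw [hr1] at hd1
    rw [hr2, hr3] at hd2
    have heq : LinearMap.ker ((fromCols R B)ᵀ.mulVecLin) = LinearMap.ker Rt.mulVecLin := by
      apply Submodule.eq_of_le_of_finrank_le hle
      omega
    intro x hx
    have hm : x ∈ LinearMap.ker Rt.mulVecLin := by
      rw [LinearMap.mem_ker, Matrix.mulVecLin_apply]; exact hx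
    rw [← heq, LinearMap.mem_ker, Matrix.mulVecLin_apply, transpose_fromCols,
      fromRows_mulVec] at hm
    have hRx : Rᵀ *ᵥ x = 0 := funext fun i => congrFun hm (Sum.inl i)
    have hBx : Bᵀ *ᵥ x = 0 := funext fun i => congrFun hm (Sum.inr i)
    rw [hRsymm] at hRx
    exact ⟨hRx, hBx⟩
  have hRtBF : ∀ x : Fin n → ℝ, Rt *ᵥ x = 0 → B *ᵥ (F *ᵥ x) = 0 := by
    intro x hx
    obtain ⟨hRx, hBx⟩ := hRtker x hx
    have h1 : Rt *ᵥ x = R *ᵥ x - (1/2 : ℝ) • (B *ᵥ (F *ᵥ x) + Fᵀ *ᵥ (Bᵀ *ᵥ x)) := by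
      rw [hRtdef, Matrix.sub_mulVec, smul_mulVec, Matrix.add_mulVec,
        ← mulVec_mulVec, ← mulVec_mulVec]
    rw [hx, hRx, hBx, mulVec_zero, add_zero] at h1
    have h2 : (1/2 : ℝ) • (B *ᵥ (F *ᵥ x)) = 0 := by
      have h3 := h1.symm
      rwa [zero_sub, neg_eq_zero] at h3
    simpa using smul_eq_zero.mp h2 |>.resolve_left (by norm_num)
  -- A22 invertible
  have hA22 : (KEᵀ * A * KE).det ≠ 0 := by
    intro hdet
    obtain ⟨z, hz0, hz⟩ := Matrix.exists_mulVec_eq_zero_iff.mpr hdet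
    have hxA : KEᵀ *ᵥ (A *ᵥ (KE *ᵥ z)) = 0 := by
      rw [mulVec_mulVec, mulVec_mulVec]; exact hz
    have hJ'skew : (J + (1/2:ℝ) • (B*F - Fᵀ*Bᵀ))ᵀ = -(J + (1/2:ℝ) • (B*F - Fᵀ*Bᵀ)) := by
      rw [transpose_add, transpose_smul, transpose_sub, transpose_mul, transpose_mul,
        transpose_transpose, transpose_transpose, hJ]
      module
    have hAsplit : A = (J + (1/2:ℝ) • (B*F - Fᵀ*Bᵀ)) - Rt := by
      rw [hAdef, hRtdef]; module
    have hRtx : Rt *ᵥ (KE *ᵥ z) = 0 := by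
      apply aux_psd_zero hRt
      have h1 := aux_triple KE A z
      rw [hz, dotProduct_zero] at h1
      have h2 : (KE *ᵥ z) ⬝ᵥ A *ᵥ (KE *ᵥ z) = 0 := h1.symm
      rw [hAsplit, Matrix.sub_mulVec, dotProduct_sub, aux_skew_dot hJ'skew, zero_sub,
        neg_eq_zero] at h2
      exact h2
    obtain ⟨hRx, hBx⟩ := hRtker _ hRtx
    have hBFx := hRtBF _ hRtx
    have hAx : A *ᵥ (KE *ᵥ z) = J *ᵥ (KE *ᵥ z) := by
      rw [hAdef, Matrix.add_mulVec, Matrix.sub_mulVec, ← mulVec_mulVec, hBFx, hRx,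
        sub_zero, add_zero]
    have hMx : (fromCols (fromCols E ((J - R) * KE)) B)ᵀ *ᵥ (KE *ᵥ z) = 0 := by
      rw [transpose_fromCols, transpose_fromCols, fromRows_mulVec, fromRows_mulVec]
      have c1 : Eᵀ *ᵥ (KE *ᵥ z) = 0 := by rw [hEsymm]; exact hEKEv z
      have c2 : ((J - R) * KE)ᵀ *ᵥ (KE *ᵥ z) = 0 := by
        rw [transpose_mul, ← mulVec_mulVec, transpose_sub, hJ, hRsymm, Matrix.sub_mulVec,
          hRx, sub_zero, neg_mulVec, Matrix.mulVec_neg, neg_eq_zero, ← hAx]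
        exact hxA
      rw [c1, c2, hBx]
      ext (i | i) <;> simp
    have hx0 : KE *ᵥ z = 0 := aux_fullRank_inj _ hindex hMx
    exact hz0 (hKEinj z hx0)
  -- basis of range E
  have hfr : Module.finrank ℝ (LinearMap.range E.mulVecLin) = E.rank := rfl
  let b : Module.Basis (Fin E.rank) ℝ (LinearMap.range E.mulVecLin) :=
    (Module.finBasis ℝ _).reindex (finCongr hfr)
  let U : Matrix (Fin n) (Fin E.rank) ℝ := fun i j => (b j : Fin n → ℝ) i
  have hUmul : ∀ zv : Fin E.rank → ℝ, U *ᵥ zv = ∑ j, zv j • ((b j : Fin n → ℝ)) := by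
    intro zv; ext i
    simp [U, mulVec, dotProduct, Finset.sum_apply, mul_comm]
  have hUmem : ∀ zv, U *ᵥ zv ∈ LinearMap.range E.mulVecLin := by
    intro zv; rw [hUmul]
    exact Submodule.sum_mem _ fun j _ => Submodule.smul_mem _ _ (b j).2
  have hUinj : ∀ zv, U *ᵥ zv = 0 → zv = 0 := by
    intro zv h
    rw [hUmul] at h
    have h2 : (∑ j, zv j • b j) = (0 : LinearMap.range E.mulVecLin) := by
      apply Subtype.ext
      simpa using h
    funext j
    exact Fintype.linearIndependent_iff.mp b.linearIndependent zv h2 j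
  have hZero : ∀ v, v ∈ LinearMap.range E.mulVecLin → E *ᵥ v = 0 → v = 0 := by
    rintro v ⟨y, rfl⟩ hEv
    simp only [Matrix.mulVecLin_apply] at hEv ⊢
    rw [← dotProduct_self_eq_zero, dotProduct_mulVec, ← mulVec_transpose, hEsymm, hEv,
      zero_dotProduct]
  have hE1det : (Uᵀ * E * U).det ≠ 0 := by
    intro hdet
    obtain ⟨z, hz0, hz⟩ := Matrix.exists_mulVec_eq_zero_iff.mpr hdet
    have h1 := aux_triple U E z
    rw [hz, dotProduct_zero] at h1
    have h2 : E *ᵥ (U *ᵥ z) = 0 := aux_psd_zero hE h1.symm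
    exact hz0 (hUinj z (hZero _ (hUmem z) h2))
  -- the square change of basis
  let e : (Fin E.rank ⊕ Fin k) ≃ Fin n := finSumFinEquiv.trans (finCongr hrksum)
  let P : Matrix (Fin n) (Fin E.rank ⊕ Fin k) ℝ := fromCols U KE
  have hPdef : P = fromCols U KE := rfl
  let Pe : Matrix (Fin E.rank ⊕ Fin k) (Fin E.rank ⊕ Fin k) ℝ := P.submatrix e id
  have hPedef : Pe = P.submatrix e id := rfl
  have hPedet : Pe.det ≠ 0 := by
    intro hdet
    obtain ⟨w, hw0, hw⟩ := Matrix.exists_mulVec_eq_zero_iff.mpr hdet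
    have hPw : P *ᵥ w = 0 := by
      have h1 : (P *ᵥ w) ∘ e = 0 := hw
      funext i
      have h2 := congrFun h1 (e.symm i)
      simpa using h2
    have h2 : P *ᵥ (Sum.elim (w ∘ Sum.inl) (w ∘ Sum.inr)) = 0 := by
      rwa [Sum.elim_comp_inl_inr]
    rw [hPdef, fromCols_mulVec_sumElim] at h2
    have hU1 : U *ᵥ (w ∘ Sum.inl) = 0 := by
      have h4 : U *ᵥ (w ∘ Sum.inl) = - (KE *ᵥ (w ∘ Sum.inr)) := eq_neg_of_add_eq_zero_left h2
      have h3 : E *ᵥ (U *ᵥ (w ∘ Sum.inl)) = 0 := by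
        rw [h4, Matrix.mulVec_neg, hEKEv, neg_zero]
      exact hZero _ (hUmem _) h3
    have hKE2 : KE *ᵥ (w ∘ Sum.inr) = 0 := by
      rw [hU1, zero_add] at h2; exact h2
    apply hw0
    funext c
    cases c with
    | inl i => exact congrFun (hUinj _ hU1) i
    | inr i => exact congrFun (hKEinj _ hKE2) i
  -- block structure
  have hUEKE : Uᵀ * E * KE = 0 := by rw [Matrix.mul_assoc, hEKE, Matrix.mul_zero]
  have hMblock : Pᵀ * E * P = fromBlocks (Uᵀ * E * U) 0 0 0 := by
    rw [hPdef, transpose_fromCols, fromRows_mul, hKEtE, fromRows_mul_fromCols,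
      Matrix.zero_mul, Matrix.zero_mul, hUEKE]
  have hNblock : Pᵀ * A * P
      = fromBlocks (Uᵀ*A*U) (Uᵀ*A*KE) (KEᵀ*A*U) (KEᵀ*A*KE) := by
    rw [hPdef, transpose_fromCols, fromRows_mul, fromRows_mul_fromCols]
  -- submatrix transfer
  have hsub : ∀ (M : Matrix (Fin n) (Fin n) ℝ), Peᵀ * M.submatrix e e * Pe = Pᵀ * M * P := by
    intro M
    rw [hPedef, transpose_submatrix, submatrix_mul_equiv Pᵀ M id e ⇑e,
      submatrix_mul_equiv (Pᵀ*M) P id e id, submatrix_id_id]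
  -- invertibility over ℝ
  have hD0det : (-(KEᵀ*A*KE)).det ≠ 0 := by
    rw [Matrix.det_neg]
    exact mul_ne_zero (pow_ne_zero _ (by norm_num)) hA22
  haveI iD0 : Invertible (-(KEᵀ*A*KE)) :=
    (-(KEᵀ*A*KE)).invertibleOfIsUnitDet (isUnit_iff_ne_zero.mpr hD0det)
  haveI iD0c : Invertible ((-(KEᵀ*A*KE)).map (C : ℝ →+* ℝ[X])) :=
    ⟨(⅟(-(KEᵀ*A*KE))).map C,
      by rw [← Matrix.map_mul, invOf_mul_self]; simp [Matrix.map_one],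
      by rw [← Matrix.map_mul, mul_invOf_self]; simp [Matrix.map_one]⟩
  have hinvc : ⅟((-(KEᵀ*A*KE)).map (C : ℝ →+* ℝ[X])) = (⅟(-(KEᵀ*A*KE))).map C := by
    apply invOf_eq_right_inv
    rw [← Matrix.map_mul, mul_invOf_self]
    simp [Matrix.map_one]
  -- polynomial block identity
  have hQ : (((X:ℝ[X]) • E.map C - A.map C).submatrix e e)
      = (X:ℝ[X]) • (E.submatrix e e).map C - (A.submatrix e e).map C := by
    ext i j
    simp
  have hblockpoly : (Pe.map (C : ℝ →+* ℝ[X]))ᵀ * (((X:ℝ[X]) • E.map C - A.map C).submatrix e e)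
        * (Pe.map C)
      = fromBlocks ((X:ℝ[X]) • (Uᵀ*E*U).map C - (Uᵀ*A*U).map C) ((-(Uᵀ*A*KE)).map C)
          ((-(KEᵀ*A*U)).map C) ((-(KEᵀ*A*KE)).map C) := by
    have step1 : (Pe.map (C : ℝ →+* ℝ[X]))ᵀ * (((X:ℝ[X]) • E.map C - A.map C).submatrix e e)
          * (Pe.map C)
        = (X:ℝ[X]) • ((Peᵀ * (E.submatrix e e) * Pe).map C)
            - ((Peᵀ * (A.submatrix e e) * Pe).map C) := by
      rw [hQ, ← Matrix.transpose_map, Matrix.mul_sub, Matrix.sub_mul, Matrix.mul_smul,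
        Matrix.smul_mul, ← Matrix.map_mul, ← Matrix.map_mul, ← Matrix.map_mul, ← Matrix.map_mul]
    rw [step1, hsub, hsub, hMblock, hNblock]
    apply Matrix.ext
    rintro (i | i) (j | j) <;>
      simp only [Matrix.sub_apply, Matrix.smul_apply, Matrix.map_apply,
        Matrix.fromBlocks_apply₁₁, Matrix.fromBlocks_apply₁₂, Matrix.fromBlocks_apply₂₁,
        Matrix.fromBlocks_apply₂₂, Matrix.zero_apply, map_zero, map_neg, Matrix.neg_apply,
        smul_zero, zero_sub, smul_eq_mul, sub_zero] <;>
      first | rfl | ring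
  -- determinants
  have hmapdet : ∀ {q : Type} [Fintype q] [DecidableEq q] (M : Matrix q q ℝ),
      (M.map (C : ℝ →+* ℝ[X])).det = C M.det := by
    intro q _ _ M
    rw [← RingHom.mapMatrix_apply, ← RingHom.map_det]
  have hdetQe : ((Pe.map (C : ℝ →+* ℝ[X]))).det = C Pe.det := hmapdet Pe
  have hLHS : Polynomial.C Pe.det * C Pe.det * ((X:ℝ[X]) • E.map C - A.map C).det
      = (fromBlocks ((X:ℝ[X]) • (Uᵀ*E*U).map C - (Uᵀ*A*U).map C) ((-(Uᵀ*A*KE)).map C)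
          ((-(KEᵀ*A*U)).map C) ((-(KEᵀ*A*KE)).map C)).det := by
    rw [← hblockpoly, det_mul, det_mul, det_transpose, hdetQe,
      det_submatrix_equiv_self e (((X:ℝ[X]) • E.map C - A.map C))]
    ring
  have hdetblocks := Matrix.det_fromBlocks₂₂
    ((X:ℝ[X]) • (Uᵀ*E*U).map C - (Uᵀ*A*U).map C) ((-(Uᵀ*A*KE)).map (C : ℝ →+* ℝ[X]))
    ((-(KEᵀ*A*U)).map C) ((-(KEᵀ*A*KE)).map C)
  have hSchur : ((X:ℝ[X]) • (Uᵀ*E*U).map C - (Uᵀ*A*U).map C)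
        - ((-(Uᵀ*A*KE)).map (C : ℝ →+* ℝ[X])) * ⅟((-(KEᵀ*A*KE)).map (C : ℝ →+* ℝ[X]))
            * ((-(KEᵀ*A*U)).map C)
      = (X:ℝ[X]) • (Uᵀ*E*U).map C
          - ((Uᵀ*A*U) + (Uᵀ*A*KE) * ⅟(-(KEᵀ*A*KE)) * (KEᵀ*A*U)).map C := by
    rw [hinvc, ← Matrix.map_mul, ← Matrix.map_mul]
    have h5 : (-(Uᵀ*A*KE)) * ⅟(-(KEᵀ*A*KE)) * (-(KEᵀ*A*U))
        = (Uᵀ*A*KE) * ⅟(-(KEᵀ*A*KE)) * (KEᵀ*A*U) := by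
      rw [Matrix.neg_mul, Matrix.mul_neg, Matrix.neg_mul, neg_neg]
    rw [h5, sub_sub]
    congr 1
    ext i j
    simp only [Matrix.add_apply, Matrix.map_apply, map_add]
  haveI iE1 : Invertible (Uᵀ*E*U) :=
    (Uᵀ*E*U).invertibleOfIsUnitDet (isUnit_iff_ne_zero.mpr hE1det)
  have hfact : (X:ℝ[X]) • (Uᵀ*E*U).map C
        - ((Uᵀ*A*U) + (Uᵀ*A*KE) * ⅟(-(KEᵀ*A*KE)) * (KEᵀ*A*U)).map C
      = (Uᵀ*E*U).map C
          * charmatrix ((Uᵀ*E*U)⁻¹ * ((Uᵀ*A*U) + (Uᵀ*A*KE) * ⅟(-(KEᵀ*A*KE)) * (KEᵀ*A*U))) := by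
    rw [charmatrix, Matrix.mul_sub]
    congr 1
    · ext i j
      simp [Matrix.scalar_apply, Matrix.mul_diagonal, Matrix.diagonal_apply, mul_comm]
    · rw [RingHom.mapMatrix_apply, ← Matrix.map_mul,
        Matrix.mul_nonsing_inv_cancel_left _ _ (isUnit_iff_ne_zero.mpr hE1det)]
  have heq : Polynomial.C Pe.det * C Pe.det * ((X:ℝ[X]) • E.map C - A.map C).det
      = C (-(KEᵀ*A*KE)).det * C (Uᵀ*E*U).det
        * ((Uᵀ*E*U)⁻¹ * ((Uᵀ*A*U) + (Uᵀ*A*KE) * ⅟(-(KEᵀ*A*KE)) * (KEᵀ*A*U))).charpoly := by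
    have hcp : ((charmatrix ((Uᵀ*E*U)⁻¹ * ((Uᵀ*A*U) + (Uᵀ*A*KE) * ⅟(-(KEᵀ*A*KE)) * (KEᵀ*A*U))))).det
        = ((Uᵀ*E*U)⁻¹ * ((Uᵀ*A*U) + (Uᵀ*A*KE) * ⅟(-(KEᵀ*A*KE)) * (KEᵀ*A*U))).charpoly := rfl
    rw [hLHS, hdetblocks, hSchur, hfact, det_mul, hcp, hmapdet, hmapdet]
    ring
  constructor
  · intro h0
    rw [h0, mul_zero] at heq
    have hrhs : C (-(KEᵀ*A*KE)).det * C (Uᵀ*E*U).det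
        * ((Uᵀ*E*U)⁻¹ * ((Uᵀ*A*U) + (Uᵀ*A*KE) * ⅟(-(KEᵀ*A*KE)) * (KEᵀ*A*U))).charpoly ≠ 0 := by
      refine mul_ne_zero (mul_ne_zero ?_ ?_) (Matrix.charpoly_monic _).ne_zero
      · exact Polynomial.C_ne_zero.mpr hD0det
      · exact Polynomial.C_ne_zero.mpr hE1det
    exact hrhs heq.symm
  · have h2 := congrArg Polynomial.natDegree heq
    rw [← Polynomial.C_mul, Polynomial.natDegree_C_mul (mul_ne_zero hPedet hPedet),
      ← Polynomial.C_mul, Polynomial.natDegree_C_mul (mul_ne_zero hD0det hE1det),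
      Matrix.charpoly_natDegree_eq_dim, Fintype.card_fin] at h2
    exact h2
end

section
/- Let R ∈ ℝⁿˣⁿ be symmetric positive semidefinite and B ∈ ℝⁿˣᵐ. Then there exist a nonsingular matrix X ∈ ℝⁿˣⁿ and a nonsingular matrix Y ∈ ℝᵐˣᵐ such that XRXᵀ = diag(R₁₁, I_{n₂}, 0) with R₁₁ = R₁₁ᵀ ≥ 0 of size n₁, and XBYᵀ = [[I_{n₁}, 0],[0, 0],[0, 0]] (with block row sizes n₁, n₂, n₃ and column sizes n₁, m−n₁). -/
open Matrix Module

lemma psd_col_zero {k : Type*} [Fintype k] [DecidableEq k] {M : Matrix k k ℝ}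
    (hM : M.PosSemidef) {j : k} (hj : M j j = 0) (i : k) : M i j = 0 := by
  have h0 : star (Pi.single j (1:ℝ)) ⬝ᵥ M *ᵥ Pi.single j 1 = 0 := by
    simp [mulVec_single, dotProduct, Pi.single_apply, hj]
  have := (hM.dotProduct_mulVec_zero_iff _).mp h0
  have := congrFun this i
  simpa [mulVec_single] using this


lemma psd_congruence_normal_form {k : ℕ} (M : Matrix (Fin k) (Fin k) ℝ) (hM : M.PosSemidef) :
    ∃ (k₂ k₃ : ℕ), k₂ + k₃ = k ∧
      ∃ (D : Matrix (Fin k₂ ⊕ Fin k₃) (Fin k) ℝ) (Dinv : Matrix (Fin k) (Fin k₂ ⊕ Fin k₃) ℝ),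
        D * Dinv = 1 ∧ Dinv * D = 1 ∧
        D * M * Dᵀ = fromBlocks 1 0 0 0 := by
  classical
  have hH := hM.isHermitian
  set U : Matrix (Fin k) (Fin k) ℝ := (hH.eigenvectorUnitary : Matrix (Fin k) (Fin k) ℝ) with hU
  set ev : Fin k → ℝ := hH.eigenvalues with hev
  have hevnn : ∀ i, 0 ≤ ev i := hM.eigenvalues_nonneg
  set s : Fin k → ℝ := fun i => if ev i = 0 then 1 else (Real.sqrt (ev i))⁻¹ with hs
  have hsne : ∀ i, s i ≠ 0 := by
    intro i
    by_cases h : ev i = 0 <;> simp [hs, h]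
    · exact Real.sqrt_ne_zero'.mpr (lt_of_le_of_ne (hevnn i) (Ne.symm h))
  set D₀ : Matrix (Fin k) (Fin k) ℝ := diagonal s * Uᵀ with hD₀
  set E₀ : Matrix (Fin k) (Fin k) ℝ := U * diagonal (fun i => (s i)⁻¹) with hE₀
  have hUH : Uᴴ = Uᵀ := conjTranspose_eq_transpose_of_trivial U
  have hUU' : U * Uᵀ = 1 := by
    rw [← hUH]; exact (Matrix.mem_unitaryGroup_iff).mp hH.eigenvectorUnitary.2
  have hUU : Uᵀ * U = 1 := by
    rw [← hUH]; exact (Matrix.mem_unitaryGroup_iff').mp hH.eigenvectorUnitary.2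
  have hDE : D₀ * E₀ = 1 := by
    rw [hD₀, hE₀, Matrix.mul_assoc, ← Matrix.mul_assoc Uᵀ, hUU, Matrix.one_mul,
      diagonal_mul_diagonal]
    have : (fun i => s i * (s i)⁻¹) = fun _ : Fin k => (1:ℝ) :=
      funext fun i => mul_inv_cancel₀ (hsne i)
    rw [this, diagonal_one]
  have hED : E₀ * D₀ = 1 := by
    rw [hE₀, hD₀, Matrix.mul_assoc, ← Matrix.mul_assoc (diagonal fun i => (s i)⁻¹),
      diagonal_mul_diagonal]
    have : (fun i => (s i)⁻¹ * s i) = fun _ : Fin k => (1:ℝ) :=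
      funext fun i => inv_mul_cancel₀ (hsne i)
    rw [this, diagonal_one, Matrix.one_mul, hUU']
  set d : Fin k → ℝ := fun i => if ev i = 0 then 0 else 1 with hd
  have hDMD : D₀ * M * D₀ᵀ = diagonal d := by
    have hspec : M = U * diagonal ev * Uᵀ := by
      have h1 := hH.spectral_theorem
      rw [Unitary.conjStarAlgAut_apply, Matrix.star_eq_conjTranspose, hUH] at h1
      exact h1
    have hD₀T : D₀ᵀ = U * diagonal s := by
      rw [hD₀, transpose_mul, transpose_transpose, diagonal_transpose]
    rw [hD₀, hD₀T]
    conv_lhs => rw [hspec]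
    calc diagonal s * Uᵀ * (U * diagonal ev * Uᵀ) * (U * diagonal s)
        = diagonal s * (Uᵀ * U) * (diagonal ev * ((Uᵀ * U) * diagonal s)) := by
          simp only [Matrix.mul_assoc]
      _ = diagonal s * diagonal ev * diagonal s := by
          rw [hUU, Matrix.one_mul, Matrix.mul_one, Matrix.mul_assoc]
      _ = diagonal d := by
          rw [diagonal_mul_diagonal, diagonal_mul_diagonal]
          have hfun : (fun i => s i * ev i * s i) = d := by
            funext i
            by_cases h : ev i = 0
            · simp [hs, hd, h]
            · have hpos : 0 < ev i := lt_of_le_of_ne (hevnn i) (Ne.symm h)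
              have hsq : Real.sqrt (ev i) ≠ 0 := Real.sqrt_ne_zero'.mpr hpos
              simp only [hs, hd, if_neg h]
              field_simp
              rw [Real.sq_sqrt hpos.le]
          exact congrArg Matrix.diagonal hfun
  -- permutation
  set p : Fin k → Prop := fun i => ev i ≠ 0 with hp
  set k₂ := Fintype.card {i // p i} with hk₂
  set k₃ := Fintype.card {i // ¬ p i} with hk₃
  have hcard : k₂ + k₃ = k := by
    have h1 := Fintype.card_congr (Equiv.sumCompl p)
    rw [Fintype.card_sum, Fintype.card_fin] at h1
    exact h1
  set e₁ : {i // p i} ≃ Fin k₂ := Fintype.equivFinOfCardEq rfl with he₁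
  set e₂ : {i // ¬ p i} ≃ Fin k₃ := Fintype.equivFinOfCardEq rfl with he₂
  set e : Fin k ≃ (Fin k₂ ⊕ Fin k₃) := (Equiv.sumCompl p).symm.trans (e₁.sumCongr e₂) with he
  have hesymm_inl : ∀ i : Fin k₂, (e.symm (Sum.inl i) : Fin k) = (e₁.symm i : Fin k) := by
    intro i; simp [he, Equiv.sumCongr_symm, Equiv.sumCompl_apply_inl]
  have hesymm_inr : ∀ i : Fin k₃, (e.symm (Sum.inr i) : Fin k) = (e₂.symm i : Fin k) := by
    intro i; simp [he, Equiv.sumCongr_symm, Equiv.sumCompl_apply_inr]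
  have hd_inl : ∀ i : Fin k₂, d (e.symm (Sum.inl i)) = 1 := by
    intro i
    rw [hesymm_inl i]
    have h2 : ev (e₁.symm i : Fin k) ≠ 0 := (e₁.symm i).2
    simp only [hd]
    rw [if_neg h2]
  have hd_inr : ∀ i : Fin k₃, d (e.symm (Sum.inr i)) = 0 := by
    intro i
    rw [hesymm_inr i]
    have h2 : ¬ (ev (e₂.symm i : Fin k) ≠ 0) := (e₂.symm i).2
    rw [not_not] at h2
    simp only [hd]
    rw [if_pos h2]
  refine ⟨k₂, k₃, hcard, D₀.submatrix e.symm id, E₀.submatrix id e.symm, ?_, ?_, ?_⟩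
  · rw [show (id : Fin k → Fin k) = ⇑(Equiv.refl (Fin k)) from rfl, submatrix_mul_equiv, hDE,
      submatrix_one_equiv]
  · rw [submatrix_mul_equiv, hED, submatrix_id_id]
  · rw [transpose_submatrix]
    have key : D₀.submatrix ⇑e.symm id * M * D₀ᵀ.submatrix id ⇑e.symm
        = (D₀ * M * D₀ᵀ).submatrix ⇑e.symm ⇑e.symm := by
      conv_lhs => rw [show M = M.submatrix id id from (submatrix_id_id M).symm]
      rw [show (id : Fin k → Fin k) = ⇑(Equiv.refl (Fin k)) from rfl]
      rw [submatrix_mul_equiv, submatrix_mul_equiv]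
    rw [key, hDMD]
    ext a b
    rcases a with a | a <;> rcases b with b | b <;>
      simp only [submatrix_apply, fromBlocks_apply₁₁, fromBlocks_apply₁₂,
        fromBlocks_apply₂₁, fromBlocks_apply₂₂, diagonal_apply]
    · by_cases hab : a = b
      · subst hab
        rw [if_pos rfl, one_apply_eq, hd_inl]
      · rw [if_neg (by simp [EmbeddingLike.apply_eq_iff_eq, hab]), one_apply_ne hab]
    · rw [if_neg (by simp [EmbeddingLike.apply_eq_iff_eq])]; rfl
    · rw [if_neg (by simp [EmbeddingLike.apply_eq_iff_eq])]; rfl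
    · by_cases hab : a = b
      · subst hab
        rw [if_pos rfl, hd_inr]; rfl
      · rw [if_neg (by simp [EmbeddingLike.apply_eq_iff_eq, hab])]; rfl


lemma rank_normal_form {n m : ℕ} (B : Matrix (Fin n) (Fin m) ℝ) :
    ∃ (r n' m₂ : ℕ), r + n' = n ∧ r + m₂ = m ∧
      ∃ (P : Matrix (Fin r ⊕ Fin n') (Fin n) ℝ) (Pinv : Matrix (Fin n) (Fin r ⊕ Fin n') ℝ)
        (Q : Matrix (Fin r ⊕ Fin m₂) (Fin m) ℝ) (Qinv : Matrix (Fin m) (Fin r ⊕ Fin m₂) ℝ),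
        P * Pinv = 1 ∧ Pinv * P = 1 ∧ Q * Qinv = 1 ∧ Qinv * Q = 1 ∧
        P * B * Qᵀ = fromBlocks 1 0 0 0 := by
  classical
  set f : (Fin m → ℝ) →ₗ[ℝ] (Fin n → ℝ) := Matrix.mulVecLin B with hf
  obtain ⟨K', hK'⟩ := (LinearMap.ker f).exists_isCompl
  obtain ⟨W', hW'⟩ := (LinearMap.range f).exists_isCompl
  set r := finrank ℝ K' with hr
  set m₂ := finrank ℝ (LinearMap.ker f) with hm₂
  set n' := finrank ℝ W' with hn'
  have hrn : r + n' = n := by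
    have h1 : finrank ℝ (LinearMap.range f) + n' = n := by
      have := Submodule.finrank_add_eq_of_isCompl hW'
      rwa [Module.finrank_fin_fun] at this
    have h2 : r = finrank ℝ (LinearMap.range f) := by
      rw [hr, ← f.quotKerEquivRange.finrank_eq,
        ← (Submodule.quotientEquivOfIsCompl _ _ hK').finrank_eq]
    rw [h2]; exact h1
  have hrm : r + m₂ = m := by
    have := Submodule.finrank_add_eq_of_isCompl hK'.symm
    rwa [Module.finrank_fin_fun] at this
  -- the equivalence K' ≃ range f
  set φ : K' ≃ₗ[ℝ] LinearMap.range f :=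
    (Submodule.quotientEquivOfIsCompl _ _ hK').symm.trans f.quotKerEquivRange with hφ
  have hφapp : ∀ x : K', (φ x : Fin n → ℝ) = f x := by
    intro x
    rw [hφ]
    simp [Submodule.quotientEquivOfIsCompl_symm_apply, LinearMap.quotKerEquivRange_apply_mk]
  set bK' : Basis (Fin r) ℝ K' := finBasis ℝ K' with hbK'
  set bK : Basis (Fin m₂) ℝ (LinearMap.ker f) := finBasis ℝ (LinearMap.ker f) with hbK
  set bW : Basis (Fin r) ℝ (LinearMap.range f) := bK'.map φ with hbW
  set bW' : Basis (Fin n') ℝ W' := finBasis ℝ W' with hbW'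
  set b : Basis (Fin r ⊕ Fin m₂) ℝ (Fin m → ℝ) :=
    (bK'.prod bK).map (Submodule.prodEquivOfIsCompl _ _ hK'.symm) with hb
  set c : Basis (Fin r ⊕ Fin n') ℝ (Fin n → ℝ) :=
    (bW.prod bW').map (Submodule.prodEquivOfIsCompl _ _ hW') with hc
  have hbinl : ∀ i, b (Sum.inl i) = (bK' i : Fin m → ℝ) := by
    intro i
    rw [hb]
    simp [Basis.prod_apply, Submodule.coe_prodEquivOfIsCompl']
  have hbinr : ∀ j, b (Sum.inr j) = (bK j : Fin m → ℝ) := by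
    intro j
    rw [hb]
    simp [Basis.prod_apply, Submodule.coe_prodEquivOfIsCompl']
  have hcinl : ∀ i, c (Sum.inl i) = f (bK' i : Fin m → ℝ) := by
    intro i
    rw [hc]
    simp only [Basis.map_apply, Basis.prod_apply]
    rw [Submodule.coe_prodEquivOfIsCompl']
    simp [hbW, hφapp]
  have hfb_inl : ∀ i, f (b (Sum.inl i)) = c (Sum.inl i) := by
    intro i; rw [hbinl, hcinl]
  have hfb_inr : ∀ j, f (b (Sum.inr j)) = 0 := by
    intro j; rw [hbinr]; exact (bK j).2
  have hmat : LinearMap.toMatrix b c f = fromBlocks 1 0 0 0 := by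
    ext k l
    rw [LinearMap.toMatrix_apply]
    rcases l with i | j
    · rw [hfb_inl, c.repr_self]
      rcases k with k | k
      · simp [Finsupp.single_apply, one_apply, eq_comm]
      · simp [Finsupp.single_apply]
    · rw [hfb_inr]
      rcases k with k | k <;> simp
  -- change of basis
  set sb_m : Basis (Fin m) ℝ (Fin m → ℝ) := Pi.basisFun ℝ (Fin m) with hsbm
  set sb_n : Basis (Fin n) ℝ (Fin n → ℝ) := Pi.basisFun ℝ (Fin n) with hsbn
  set P := LinearMap.toMatrix sb_n c (LinearMap.id) with hP
  set Pinv := LinearMap.toMatrix c sb_n (LinearMap.id) with hPinv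
  set N := LinearMap.toMatrix b sb_m (LinearMap.id) with hN
  set Ninv := LinearMap.toMatrix sb_m b (LinearMap.id) with hNinv
  have hPP : P * Pinv = 1 := by
    rw [hP, hPinv, ← LinearMap.toMatrix_comp c sb_n c LinearMap.id LinearMap.id,
      LinearMap.id_comp, LinearMap.toMatrix_id]
  have hPP' : Pinv * P = 1 := by
    rw [hP, hPinv, ← LinearMap.toMatrix_comp sb_n c sb_n LinearMap.id LinearMap.id,
      LinearMap.id_comp, LinearMap.toMatrix_id]
  have hNN : Ninv * N = 1 := by
    rw [hN, hNinv, ← LinearMap.toMatrix_comp b sb_m b LinearMap.id LinearMap.id,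
      LinearMap.id_comp, LinearMap.toMatrix_id]
  have hNN' : N * Ninv = 1 := by
    rw [hN, hNinv, ← LinearMap.toMatrix_comp sb_m b sb_m LinearMap.id LinearMap.id,
      LinearMap.id_comp, LinearMap.toMatrix_id]
  have hB : LinearMap.toMatrix sb_m sb_n f = B := by
    rw [hsbm, hsbn]
    show LinearMap.toMatrix' f = B
    rw [hf, ← Matrix.toLin'_apply', LinearMap.toMatrix'_toLin']
  have hPBN : P * B * N = fromBlocks 1 0 0 0 := by
    rw [← hmat, ← hB, hP, hN,
      ← LinearMap.toMatrix_comp sb_m sb_n c LinearMap.id f, LinearMap.id_comp,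
      ← LinearMap.toMatrix_comp b sb_m c f LinearMap.id, LinearMap.comp_id]
  exact ⟨r, n', m₂, hrn, hrm, P, Pinv, Nᵀ, Ninvᵀ, hPP, hPP',
    by rw [← transpose_mul, hNN, transpose_one],
    by rw [← transpose_mul, hNN', transpose_one],
    by rwa [transpose_transpose]⟩

/-- Simultaneous block compression of a positive semidefinite matrix R and a
general matrix B. -/
theorem simultaneous_compression
    {n m : ℕ}
    (R : Matrix (Fin n) (Fin n) ℝ) (B : Matrix (Fin n) (Fin m) ℝ)
    (hR : R.PosSemidef) :
    ∃ (n₁ n₂ n₃ m₂ : ℕ), n₁ + n₂ + n₃ = n ∧ n₁ + m₂ = m ∧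
      ∃ (X : Matrix (Fin n₁ ⊕ (Fin n₂ ⊕ Fin n₃)) (Fin n) ℝ)
        (Xinv : Matrix (Fin n) (Fin n₁ ⊕ (Fin n₂ ⊕ Fin n₃)) ℝ)
        (Y : Matrix (Fin n₁ ⊕ Fin m₂) (Fin m) ℝ)
        (Yinv : Matrix (Fin m) (Fin n₁ ⊕ Fin m₂) ℝ)
        (R₁₁ : Matrix (Fin n₁) (Fin n₁) ℝ),
        X * Xinv = 1 ∧ Xinv * X = 1 ∧ Y * Yinv = 1 ∧ Yinv * Y = 1 ∧
        R₁₁.PosSemidef ∧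
        X * R * Xᵀ = fromBlocks R₁₁ 0 0 (fromBlocks 1 0 0 0) ∧
        X * B * Yᵀ = fromBlocks 1 0 0 0 := by
  classical
  obtain ⟨r, n', m₂, hrn, hrm, P, Pinv, Q, Qinv, hPP, hPP', hQQ, hQQ', hPBQ⟩ :=
    rank_normal_form B
  set A := P * R * Pᵀ with hAdef
  have hApsd : A.PosSemidef := by
    have := hR.mul_mul_conjTranspose_same P
    rwa [conjTranspose_eq_transpose_of_trivial] at this
  have hAblocks : A = fromBlocks A.toBlocks₁₁ A.toBlocks₁₂ A.toBlocks₂₁ A.toBlocks₂₂ :=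
    (fromBlocks_toBlocks A).symm
  set A₁₁ := A.toBlocks₁₁
  set A₁₂ := A.toBlocks₁₂
  set A₂₁ := A.toBlocks₂₁
  set A₂₂ := A.toBlocks₂₂
  have hA22 : A₂₂.PosSemidef := hApsd.submatrix Sum.inr
  obtain ⟨n₂, n₃, hn23, D, Dinv, hDD, hDD', hDAD⟩ := psd_congruence_normal_form A₂₂ hA22
  set E : Matrix (Fin n₂ ⊕ Fin n₃) (Fin n₂ ⊕ Fin n₃) ℝ := fromBlocks 1 0 0 0 with hE
  set X₂ : Matrix (Fin r ⊕ (Fin n₂ ⊕ Fin n₃)) (Fin r ⊕ Fin n') ℝ := fromBlocks 1 0 0 D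
    with hX₂
  set X₂inv : Matrix (Fin r ⊕ Fin n') (Fin r ⊕ (Fin n₂ ⊕ Fin n₃)) ℝ := fromBlocks 1 0 0 Dinv
    with hX₂inv
  have hX2 : X₂ * X₂inv = 1 := by
    rw [hX₂, hX₂inv, fromBlocks_multiply]
    simp [hDD, fromBlocks_one]
  have hX2' : X₂inv * X₂ = 1 := by
    rw [hX₂, hX₂inv, fromBlocks_multiply]
    simp [hDD', fromBlocks_one]
  have hX2T : X₂ᵀ = fromBlocks 1 0 0 Dᵀ := by
    rw [hX₂, fromBlocks_transpose, transpose_one, transpose_zero, transpose_zero]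
  set S := A₁₂ * Dᵀ with hS
  set T := D * A₂₁ with hT
  have hMeq : X₂ * A * X₂ᵀ = fromBlocks A₁₁ S T E := by
    have h1 : X₂ * A = fromBlocks A₁₁ A₁₂ (D * A₂₁) (D * A₂₂) := by
      conv_lhs => rw [hAblocks]
      rw [hX₂, fromBlocks_multiply]
      simp
    have hDAD' : D * (A₂₂ * Dᵀ) = E := by rw [← Matrix.mul_assoc, hDAD]
    rw [h1, hX2T, fromBlocks_multiply]
    simp [hS, hT, hE, hDAD', Matrix.mul_assoc]
  have hMpsd : (fromBlocks A₁₁ S T E).PosSemidef := by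
    rw [← hMeq]
    have := hApsd.mul_mul_conjTranspose_same X₂
    rwa [conjTranspose_eq_transpose_of_trivial] at this
  have hsym : (fromBlocks A₁₁ S T E)ᵀ = fromBlocks A₁₁ S T E := by
    have h := hMpsd.isHermitian
    rwa [Matrix.IsHermitian, conjTranspose_eq_transpose_of_trivial] at h
  have hT21 : T = Sᵀ := by
    have h := congrArg Matrix.toBlocks₂₁ hsym
    rw [fromBlocks_transpose] at h
    simpa [toBlocks_fromBlocks₂₁] using h.symm
  rw [hT21] at hMeq hMpsd
  have hS0 : ∀ i j, S i (Sum.inr j) = 0 := by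
    intro i j
    have hj : (fromBlocks A₁₁ S Sᵀ E) (Sum.inr (Sum.inr j)) (Sum.inr (Sum.inr j)) = 0 := by
      simp [hE, fromBlocks_apply₂₂]
    exact psd_col_zero hMpsd hj (Sum.inl i)
  have hSE : S * E = S := by
    ext i x
    rcases x with a | a
    · simp [mul_apply, Fintype.sum_sum_type, hE, one_apply, mul_ite]
    · simp [mul_apply, Fintype.sum_sum_type, hE, hS0 i a]
  have hET : Eᵀ = E := by
    rw [hE, fromBlocks_transpose, transpose_one, transpose_zero, transpose_zero, transpose_zero]
  have hES : E * Sᵀ = Sᵀ := by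
    rw [← hET, ← transpose_mul, hSE]
  set X₃ : Matrix (Fin r ⊕ (Fin n₂ ⊕ Fin n₃)) (Fin r ⊕ (Fin n₂ ⊕ Fin n₃)) ℝ :=
    fromBlocks 1 (-S) 0 1 with hX₃
  set X₃inv : Matrix (Fin r ⊕ (Fin n₂ ⊕ Fin n₃)) (Fin r ⊕ (Fin n₂ ⊕ Fin n₃)) ℝ :=
    fromBlocks 1 S 0 1 with hX₃inv
  have hX3 : X₃ * X₃inv = 1 := by
    rw [hX₃, hX₃inv, fromBlocks_multiply]
    simp [fromBlocks_one]
  have hX3' : X₃inv * X₃ = 1 := by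
    rw [hX₃, hX₃inv, fromBlocks_multiply]
    simp [fromBlocks_one]
  have hX3T : X₃ᵀ = fromBlocks 1 0 (-Sᵀ) 1 := by
    rw [hX₃, fromBlocks_transpose, transpose_one, transpose_one, transpose_zero, transpose_neg]
  set R₁₁ := A₁₁ - S * Sᵀ with hR₁₁
  have hfinal : X₃ * (fromBlocks A₁₁ S Sᵀ E) * X₃ᵀ = fromBlocks R₁₁ 0 0 E := by
    have h1 : X₃ * (fromBlocks A₁₁ S Sᵀ E) = fromBlocks R₁₁ 0 Sᵀ E := by
      rw [hX₃, fromBlocks_multiply]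
      simp [hR₁₁, hSE, sub_eq_add_neg, Matrix.neg_mul]
    rw [h1, hX3T, fromBlocks_multiply]
    simp [hES]
  -- assemble
  refine ⟨r, n₂, n₃, m₂, by omega, hrm,
    X₃ * X₂ * P, Pinv * (X₂inv * X₃inv), Q, Qinv, R₁₁, ?_, ?_, hQQ, hQQ', ?_, ?_, ?_⟩
  · calc X₃ * X₂ * P * (Pinv * (X₂inv * X₃inv))
        = X₃ * (X₂ * ((P * Pinv) * X₂inv) * X₃inv) := by
          simp only [Matrix.mul_assoc]
      _ = 1 := by rw [hPP, Matrix.one_mul, hX2, Matrix.one_mul, hX3]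
  · calc Pinv * (X₂inv * X₃inv) * (X₃ * X₂ * P)
        = Pinv * (X₂inv * ((X₃inv * X₃) * X₂) * P) := by
          simp only [Matrix.mul_assoc]
      _ = 1 := by rw [hX3', Matrix.one_mul, hX2', Matrix.one_mul, hPP']
  · -- R₁₁ PSD
    have hF : (fromBlocks R₁₁ 0 0 E).PosSemidef := by
      rw [← hfinal, ← hMeq]
      have := hApsd.mul_mul_conjTranspose_same X₂
      rw [conjTranspose_eq_transpose_of_trivial] at this
      have h2 := this.mul_mul_conjTranspose_same X₃
      rwa [conjTranspose_eq_transpose_of_trivial] at h2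
    have := hF.submatrix Sum.inl
    have hsub : (fromBlocks R₁₁ (0 : Matrix _ (Fin n₂ ⊕ Fin n₃) ℝ) 0 E).submatrix
        Sum.inl Sum.inl = R₁₁ := by
      ext i j; simp [fromBlocks_apply₁₁]
    rwa [hsub] at this
  · -- X R Xᵀ
    calc X₃ * X₂ * P * R * (X₃ * X₂ * P)ᵀ
        = X₃ * (X₂ * (P * R * Pᵀ) * X₂ᵀ) * X₃ᵀ := by
          simp only [transpose_mul, Matrix.mul_assoc]
      _ = X₃ * (fromBlocks A₁₁ S Sᵀ E) * X₃ᵀ := by rw [← hAdef, hMeq]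
      _ = fromBlocks R₁₁ 0 0 E := hfinal
  · -- X B Yᵀ
    calc X₃ * X₂ * P * B * Qᵀ
        = X₃ * (X₂ * (P * B * Qᵀ)) := by simp only [Matrix.mul_assoc]
      _ = X₃ * (X₂ * (fromBlocks 1 0 0 0 : Matrix (Fin r ⊕ Fin n') (Fin r ⊕ Fin m₂) ℝ)) := by rw [hPBQ]
      _ = fromBlocks 1 0 0 0 := by
          rw [hX₂, hX₃, fromBlocks_multiply, fromBlocks_multiply]
          simp
end

section
/- Let S ∈ ℝᵐˣᵐ be symmetric positive semidefinite and N ∈ ℝᵐˣᵐ skew-symmetric. Then there exists an orthogonal matrix U such that Uᵀ(S+N)U = [[D₁₁, D₁₂, 0],[−D₁₂ᵀ, D₂₂, 0],[0, 0, 0]] and UᵀSU = diag(S₁₁, 0, 0), where D₂₂ is skew-symmetric, the leading 2×2 block matrix [[D₁₁, D₁₂],[−D₁₂ᵀ, D₂₂]] is nonsingular, and S₁₁ is symmetric positive definite. -/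
open Matrix

private lemma entry_formula' {n : ℕ} {ι : Type*} [Fintype ι] (A : Matrix (Fin n) (Fin n) ℝ)
    (v : ι → (Fin n → ℝ)) (a b : ι) :
    ((Matrix.of fun i j => v j i)ᵀ * A * Matrix.of fun i j => v j i) a b
      = v a ⬝ᵥ (A *ᵥ v b) := by
  simp only [Matrix.mul_apply, Matrix.transpose_apply, Matrix.of_apply, dotProduct,
    Matrix.mulVec, Finset.sum_mul, Finset.mul_sum]
  rw [Finset.sum_comm]
  exact Finset.sum_congr rfl fun i _ => Finset.sum_congr rfl fun k _ => by ring

/-- Structured staircase form of D = S + N with S = Sᵀ ≥ 0 and N = −Nᵀ. -/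
theorem structured_staircase_form
    {m : ℕ}
    (S N : Matrix (Fin m) (Fin m) ℝ)
    (hS : S.PosSemidef) (hN : Nᵀ = -N) :
    ∃ (m₁ m₂ m₃ : ℕ), m₁ + m₂ + m₃ = m ∧
      ∃ (U : Matrix (Fin m) (Fin m₁ ⊕ (Fin m₂ ⊕ Fin m₃)) ℝ)
        (D₁₁ : Matrix (Fin m₁) (Fin m₁) ℝ)
        (D₁₂ : Matrix (Fin m₁) (Fin m₂) ℝ)
        (D₂₂ : Matrix (Fin m₂) (Fin m₂) ℝ)
        (S₁₁ : Matrix (Fin m₁) (Fin m₁) ℝ),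
        Uᵀ * U = 1 ∧ U * Uᵀ = 1 ∧
        D₂₂ᵀ = -D₂₂ ∧
        IsUnit (fromBlocks D₁₁ D₁₂ (-D₁₂ᵀ) D₂₂) ∧
        S₁₁.PosDef ∧
        Uᵀ * (S + N) * U =
          fromBlocks D₁₁ (fromCols D₁₂ 0)
            (fromRows (-D₁₂ᵀ) 0) (fromBlocks D₂₂ 0 0 0) ∧
        Uᵀ * S * U = fromBlocks S₁₁ 0 0 0 := by
  classical
  have hSt : Sᵀ = S := by
    simpa [Matrix.conjTranspose_eq_transpose_of_trivial, Matrix.IsSymm] using hS.1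
  have hDt : (S + N)ᵀ = S - N := by
    rw [Matrix.transpose_add, hSt, hN, sub_eq_add_neg]
  -- the two kernels
  set KS : Submodule ℝ (EuclideanSpace ℝ (Fin m)) := LinearMap.ker (Matrix.toEuclideanLin S)
    with hKSdef
  set KD : Submodule ℝ (EuclideanSpace ℝ (Fin m)) := LinearMap.ker (Matrix.toEuclideanLin (S + N))
    with hKDdef
  have memker : ∀ (A : Matrix (Fin m) (Fin m) ℝ) (x : EuclideanSpace ℝ (Fin m)),
      x ∈ LinearMap.ker (Matrix.toEuclideanLin A) ↔ A *ᵥ (WithLp.equiv 2 (Fin m → ℝ) x) = 0 := by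
    intro A x
    rw [LinearMap.mem_ker, Matrix.toEuclideanLin_apply]
    constructor
    · intro h
      have := congrArg (WithLp.equiv 2 (Fin m → ℝ)) h
      simpa using this
    · intro h; simpa using h
  -- elements of ker D are killed by S and N separately
  have hKDfact : ∀ x : EuclideanSpace ℝ (Fin m), x ∈ KD →
      S *ᵥ (WithLp.equiv 2 (Fin m → ℝ) x) = 0 ∧ N *ᵥ (WithLp.equiv 2 (Fin m → ℝ) x) = 0 := by
    intro x hx
    set x' := WithLp.equiv 2 (Fin m → ℝ) x with hx'def
    have hDx : (S + N) *ᵥ x' = 0 := (memker _ x).1 hx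
    have hNquad : x' ⬝ᵥ (N *ᵥ x') = 0 := by
      have h1 : x' ⬝ᵥ (N *ᵥ x') = -(x' ⬝ᵥ (N *ᵥ x')) := by
        conv_lhs => rw [Matrix.dotProduct_mulVec, ← Matrix.mulVec_transpose, hN,
          Matrix.neg_mulVec, neg_dotProduct, dotProduct_comm]
      linarith
    have hSquad : x' ⬝ᵥ (S *ᵥ x') = 0 := by
      have h0 : x' ⬝ᵥ ((S + N) *ᵥ x') = 0 := by rw [hDx, dotProduct_zero]
      rw [Matrix.add_mulVec, dotProduct_add, hNquad, add_zero] at h0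
      exact h0
    have hSx : S *ᵥ x' = 0 := by
      refine (hS.dotProduct_mulVec_zero_iff x').1 ?_
      simpa using hSquad
    refine ⟨hSx, ?_⟩
    have : (S + N) *ᵥ x' = S *ᵥ x' + N *ᵥ x' := by rw [Matrix.add_mulVec]
    rw [hDx, hSx, zero_add] at this
    exact this.symm
  have hKDS : KD ≤ KS := fun x hx => (memker S x).2 (hKDfact x hx).1
  -- dimensions
  have hdim2 : Module.finrank ℝ KD + Module.finrank ℝ (KDᗮ ⊓ KS : Submodule ℝ _)
      = Module.finrank ℝ KS :=
    Submodule.finrank_add_inf_finrank_orthogonal hKDS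
  have hdim1 : Module.finrank ℝ KS + Module.finrank ℝ KSᗮ = m := by
    simpa using Submodule.finrank_add_finrank_orthogonal (K := KS)
  refine ⟨Module.finrank ℝ KSᗮ, Module.finrank ℝ (KDᗮ ⊓ KS : Submodule ℝ _),
    Module.finrank ℝ KD, by omega, ?_⟩
  set m₁ := Module.finrank ℝ KSᗮ
  set m₂ := Module.finrank ℝ (KDᗮ ⊓ KS : Submodule ℝ _)
  set m₃ := Module.finrank ℝ KD
  -- orthonormal bases
  let b₁ := stdOrthonormalBasis ℝ (KSᗮ : Submodule ℝ (EuclideanSpace ℝ (Fin m)))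
  let b₂ := stdOrthonormalBasis ℝ ((KDᗮ ⊓ KS : Submodule ℝ (EuclideanSpace ℝ (Fin m))))
  let b₃ := stdOrthonormalBasis ℝ (KD : Submodule ℝ (EuclideanSpace ℝ (Fin m)))
  set u : Fin m₁ ⊕ (Fin m₂ ⊕ Fin m₃) → EuclideanSpace ℝ (Fin m) :=
    Sum.elim (fun i => (b₁ i : EuclideanSpace ℝ (Fin m)))
      (Sum.elim (fun j => (b₂ j : EuclideanSpace ℝ (Fin m)))
        (fun k => (b₃ k : EuclideanSpace ℝ (Fin m)))) with hu_def
  set v : Fin m₁ ⊕ (Fin m₂ ⊕ Fin m₃) → (Fin m → ℝ) :=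
    fun a => WithLp.equiv 2 (Fin m → ℝ) (u a) with hv_def
  set U : Matrix (Fin m) (Fin m₁ ⊕ (Fin m₂ ⊕ Fin m₃)) ℝ := Matrix.of fun i j => v j i
    with hU_def
  -- memberships
  have hmem1 : ∀ i, u (Sum.inl i) ∈ KSᗮ := fun i => (b₁ i).2
  have hmem2 : ∀ j, u (Sum.inr (Sum.inl j)) ∈ KDᗮ ⊓ KS := fun j => (b₂ j).2
  have hmem3 : ∀ k, u (Sum.inr (Sum.inr k)) ∈ KD := fun k => (b₃ k).2
  -- inner products
  have hinner : ∀ a b, (inner ℝ (u a) (u b) : ℝ) = if a = b then 1 else 0 := by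
    have horth1 := orthonormal_iff_ite.mp b₁.orthonormal
    have horth2 := orthonormal_iff_ite.mp b₂.orthonormal
    have horth3 := orthonormal_iff_ite.mp b₃.orthonormal
    have hcross : ∀ (x y : EuclideanSpace ℝ (Fin m)) (K : Submodule ℝ (EuclideanSpace ℝ (Fin m))),
        x ∈ K → y ∈ Kᗮ → (inner ℝ x y : ℝ) = 0 := by
      intro x y K hx hy
      exact (Submodule.mem_orthogonal K y).1 hy x hx
    rintro (i | j | k) (i' | j' | k')
    · simp only [hu_def, Sum.elim_inl]
      rw [← Submodule.coe_inner, horth1]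
      simp
    · rw [real_inner_comm]
      rw [hcross _ _ KS (hmem2 j').2 (hmem1 i)]
      simp
    · rw [real_inner_comm]
      rw [hcross _ _ KS (hKDS (hmem3 k')) (hmem1 i)]
      simp
    · rw [hcross _ _ KS (hmem2 j).2 (hmem1 i')]
      simp
    · simp only [hu_def, Sum.elim_inr, Sum.elim_inl]
      rw [← Submodule.coe_inner, horth2]
      simp [Sum.inr.injEq, Sum.inl.injEq]
    · rw [real_inner_comm, hcross _ _ KD (hmem3 k') (hmem2 j).1]
      simp
    · rw [hcross _ _ KS (hKDS (hmem3 k)) (hmem1 i')]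
      simp
    · rw [hcross _ _ KD (hmem3 k) (hmem2 j').1]
      simp
    · simp only [hu_def, Sum.elim_inr]
      rw [← Submodule.coe_inner, horth3]
      simp [Sum.inr.injEq]
  have hdot : ∀ a b, v a ⬝ᵥ v b = if a = b then 1 else 0 := by
    intro a b
    rw [← hinner a b, EuclideanSpace.inner_eq_star_dotProduct]
    simp [hv_def]
    exact dotProduct_comm _ _
  -- U is orthogonal
  have hUtU : Uᵀ * U = 1 := by
    ext a b
    rw [Matrix.one_apply]
    simp only [Matrix.mul_apply, Matrix.transpose_apply, hU_def, Matrix.of_apply]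
    rw [← hdot a b]
    rfl
  have hUUt : U * Uᵀ = 1 := by
    have e : (Fin m₁ ⊕ (Fin m₂ ⊕ Fin m₃)) ≃ Fin m := by
      apply Fintype.equivOfCardEq
      simp
      omega
    exact (Matrix.mul_eq_one_comm_of_equiv e).1 hUtU
  -- generic entry formula
  have ent : ∀ (A : Matrix (Fin m) (Fin m) ℝ) a b, (Uᵀ * A * U) a b = v a ⬝ᵥ (A *ᵥ v b) :=
    fun A a b => entry_formula' A v a b
  -- vanishing facts
  have hv2S : ∀ j, S *ᵥ v (Sum.inr (Sum.inl j)) = 0 :=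
    fun j => (memker S _).1 (hmem2 j).2
  have hv3D : ∀ k, (S + N) *ᵥ v (Sum.inr (Sum.inr k)) = 0 :=
    fun k => (memker (S + N) _).1 (hmem3 k)
  have hv3S : ∀ k, S *ᵥ v (Sum.inr (Sum.inr k)) = 0 :=
    fun k => (hKDfact _ (hmem3 k)).1
  have hv3Dt : ∀ k, (S + N)ᵀ *ᵥ v (Sum.inr (Sum.inr k)) = 0 := by
    intro k
    rw [hDt, Matrix.sub_mulVec, hv3S, (hKDfact _ (hmem3 k)).2, sub_zero]
  -- skew fact
  have hskew : ∀ a b, S *ᵥ v a = 0 → (Uᵀ * (S + N) * U) a b = -((Uᵀ * (S + N) * U) b a) := by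
    intro a b hva
    rw [ent, ent]
    have h1 : v a ⬝ᵥ ((S + N) *ᵥ v b) = ((S + N)ᵀ *ᵥ v a) ⬝ᵥ v b := by
      rw [Matrix.mulVec_transpose, ← Matrix.dotProduct_mulVec]
    have h2 : (S + N)ᵀ *ᵥ v a = -(N *ᵥ v a) := by
      rw [hDt, Matrix.sub_mulVec, hva, zero_sub]
    have h3 : (S + N) *ᵥ v a = N *ᵥ v a := by
      rw [Matrix.add_mulVec, hva, zero_add]
    rw [h1, h2, h3, neg_dotProduct, dotProduct_comm]
  -- blocks
  set D₁₁ : Matrix (Fin m₁) (Fin m₁) ℝ :=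
    Matrix.of fun i j => (Uᵀ * (S + N) * U) (Sum.inl i) (Sum.inl j) with hD11
  set D₁₂ : Matrix (Fin m₁) (Fin m₂) ℝ :=
    Matrix.of fun i j => (Uᵀ * (S + N) * U) (Sum.inl i) (Sum.inr (Sum.inl j)) with hD12
  set D₂₂ : Matrix (Fin m₂) (Fin m₂) ℝ :=
    Matrix.of fun i j => (Uᵀ * (S + N) * U) (Sum.inr (Sum.inl i)) (Sum.inr (Sum.inl j)) with hD22
  set S₁₁ : Matrix (Fin m₁) (Fin m₁) ℝ :=
    Matrix.of fun i j => (Uᵀ * S * U) (Sum.inl i) (Sum.inl j) with hS11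
  have hS11entry : ∀ i j, S₁₁ i j = v (Sum.inl i) ⬝ᵥ (S *ᵥ v (Sum.inl j)) := by
    intro i j; rw [hS11]; exact ent S _ _
  -- main block identity for D
  have hMeq : Uᵀ * (S + N) * U =
      fromBlocks D₁₁ (fromCols D₁₂ 0) (fromRows (-D₁₂ᵀ) 0) (fromBlocks D₂₂ 0 0 0) := by
    ext a b
    rcases a with i | j | k <;> rcases b with i' | j' | k'
    · rfl
    · rfl
    · simp only [fromBlocks_apply₁₂, fromCols, Matrix.of_apply, Sum.elim_inr,
        Matrix.zero_apply]
      rw [ent, hv3D, dotProduct_zero]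
    · simp only [fromBlocks_apply₂₁, fromRows, Matrix.of_apply, Sum.elim_inl,
        Matrix.neg_apply, Matrix.transpose_apply]
      rw [hskew _ _ (hv2S j)]
      rfl
    · rfl
    · simp only [fromBlocks_apply₂₂, fromBlocks_apply₁₂, Matrix.zero_apply]
      rw [ent, hv3D, dotProduct_zero]
    · simp only [fromBlocks_apply₂₁, fromRows_apply_inr, Matrix.of_apply, Sum.elim_inr,
        Matrix.zero_apply]
      rw [ent, Matrix.dotProduct_mulVec, ← Matrix.mulVec_transpose, hv3Dt,
        zero_dotProduct]
    · simp only [fromBlocks_apply₂₂, fromBlocks_apply₂₁, Matrix.zero_apply]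
      rw [ent, Matrix.dotProduct_mulVec, ← Matrix.mulVec_transpose, hv3Dt,
        zero_dotProduct]
    · simp only [fromBlocks_apply₂₂, Matrix.zero_apply]
      rw [ent, hv3D, dotProduct_zero]
  -- block identity for S
  have hrowS : ∀ a b, S *ᵥ v a = 0 → (Uᵀ * S * U) a b = 0 := by
    intro a b hva
    rw [ent, Matrix.dotProduct_mulVec, ← Matrix.mulVec_transpose, hSt, hva,
      zero_dotProduct]
  have hMSeq : Uᵀ * S * U = fromBlocks S₁₁ 0 0 0 := by
    ext a b
    rcases a with i | j | k <;> rcases b with i' | j' | k'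
    · rfl
    · simp only [fromBlocks_apply₁₂, Matrix.zero_apply]
      rw [ent, hv2S, dotProduct_zero]
    · simp only [fromBlocks_apply₁₂, Matrix.zero_apply]
      rw [ent, hv3S, dotProduct_zero]
    · simp only [fromBlocks_apply₂₁, Matrix.zero_apply]
      exact hrowS _ _ (hv2S j)
    · simp only [fromBlocks_apply₂₂, Matrix.zero_apply]
      exact hrowS _ _ (hv2S j)
    · simp only [fromBlocks_apply₂₂, Matrix.zero_apply]
      exact hrowS _ _ (hv2S j)
    · simp only [fromBlocks_apply₂₁, Matrix.zero_apply]
      exact hrowS _ _ (hv3S k)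
    · simp only [fromBlocks_apply₂₂, Matrix.zero_apply]
      exact hrowS _ _ (hv3S k)
    · simp only [fromBlocks_apply₂₂, Matrix.zero_apply]
      exact hrowS _ _ (hv3S k)
  -- D₂₂ skew
  have hD22skew : D₂₂ᵀ = -D₂₂ := by
    ext j j'
    simp only [Matrix.transpose_apply, Matrix.neg_apply, hD22, Matrix.of_apply]
    rw [hskew _ _ (hv2S j')]
  -- S₁₁ posdef
  have hcross : ∀ (x y : EuclideanSpace ℝ (Fin m)) (K : Submodule ℝ (EuclideanSpace ℝ (Fin m))),
      x ∈ K → y ∈ Kᗮ → (inner ℝ x y : ℝ) = 0 := by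
    intro x y K hx hy
    exact (Submodule.mem_orthogonal K y).1 hy x hx
  set V : Matrix (Fin m) (Fin m₁) ℝ := Matrix.of fun i j => v (Sum.inl j) i with hV
  have hVS : ∀ i j, (Vᵀ * S * V) i j = v (Sum.inl i) ⬝ᵥ (S *ᵥ v (Sum.inl j)) :=
    fun i j => entry_formula' S (fun a => v (Sum.inl a)) i j
  have hS11V : S₁₁ = Vᵀ * S * V := by
    ext i j
    rw [hS11entry i j, hVS i j]
  have hVtV : Vᵀ * V = 1 := by
    ext i j
    have h0 : (Vᵀ * V) i j = v (Sum.inl i) ⬝ᵥ v (Sum.inl j) := by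
      simp [Matrix.mul_apply, dotProduct, hV]
    rw [h0, hdot, Matrix.one_apply]
    simp
  have hVx_zero : ∀ x : Fin m₁ → ℝ, S *ᵥ (V *ᵥ x) = 0 → x = 0 := by
    intro x hSVx
    set z : EuclideanSpace ℝ (Fin m) := (WithLp.equiv 2 (Fin m → ℝ)).symm (V *ᵥ x) with hz
    have hzKS : z ∈ KS := by
      rw [memker]
      simpa [hz] using hSVx
    have hzKSp : z ∈ KSᗮ := by
      rw [Submodule.mem_orthogonal]
      intro y hy
      have hzy : (inner ℝ y z : ℝ) = (WithLp.equiv 2 (Fin m → ℝ) y) ⬝ᵥ (V *ᵥ x) := by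
        rw [EuclideanSpace.inner_eq_star_dotProduct]
        simp [hz]
        exact dotProduct_comm _ _
      rw [hzy, Matrix.dotProduct_mulVec]
      have hrow : (WithLp.equiv 2 (Fin m → ℝ) y) ᵥ* V = 0 := by
        funext j
        have : ((WithLp.equiv 2 (Fin m → ℝ) y) ᵥ* V) j
            = (WithLp.equiv 2 (Fin m → ℝ) y) ⬝ᵥ v (Sum.inl j) := by
          simp [Matrix.vecMul, dotProduct, hV]
        rw [this]
        have : (inner ℝ y (u (Sum.inl j)) : ℝ) = 0 := hcross _ _ KS hy (hmem1 j)
        rw [EuclideanSpace.inner_eq_star_dotProduct] at this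
        rw [dotProduct_comm] at this
        simpa [hv_def] using this
      rw [hrow, zero_dotProduct]
    have hzero : z = 0 := by
      have hb : z ∈ (⊥ : Submodule ℝ (EuclideanSpace ℝ (Fin m))) :=
        (Submodule.orthogonal_disjoint KS).eq_bot ▸ Submodule.mem_inf.mpr ⟨hzKS, hzKSp⟩
      simpa using hb
    have hVx : V *ᵥ x = 0 := by
      have := congrArg (WithLp.equiv 2 (Fin m → ℝ)) hzero
      simpa [hz] using this
    have h1 : Vᵀ *ᵥ (V *ᵥ x) = x := by
      rw [Matrix.mulVec_mulVec, hVtV, Matrix.one_mulVec]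
    rw [hVx, Matrix.mulVec_zero] at h1
    exact h1.symm
  have hS11posdef : S₁₁.PosDef := by
    refine Matrix.PosDef.of_dotProduct_mulVec_pos ?_ ?_
    · ext i j
      simp only [Matrix.conjTranspose_apply, star_trivial]
      rw [hS11entry, hS11entry, Matrix.dotProduct_mulVec, ← Matrix.mulVec_transpose, hSt,
        dotProduct_comm]
    · intro x hx
      have hq : star x ⬝ᵥ (S₁₁ *ᵥ x) = (V *ᵥ x) ⬝ᵥ (S *ᵥ (V *ᵥ x)) := by
        rw [star_trivial, hS11V, ← Matrix.mulVec_mulVec, ← Matrix.mulVec_mulVec,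
          Matrix.dotProduct_mulVec, Matrix.vecMul_transpose]
      rw [hq]
      have hge := hS.dotProduct_mulVec_nonneg (V *ᵥ x)
      rw [star_trivial] at hge
      rcases lt_or_eq_of_le hge with h | h
      · exact h
      · exfalso
        apply hx
        apply hVx_zero
        exact (hS.dotProduct_mulVec_zero_iff (V *ᵥ x)).1 (by simpa using h.symm)
  -- invertibility of the leading block
  have hBunit : IsUnit (fromBlocks D₁₁ D₁₂ (-D₁₂ᵀ) D₂₂) := by
    rw [← Matrix.mulVec_injective_iff_isUnit]
    have hker : ∀ x : Fin m₁ ⊕ Fin m₂ → ℝ,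
        (fromBlocks D₁₁ D₁₂ (-D₁₂ᵀ) D₂₂) *ᵥ x = 0 → x = 0 := by
      intro x hx0
      rw [Matrix.fromBlocks_mulVec] at hx0
      have hBx1 : D₁₁ *ᵥ (x ∘ Sum.inl) + D₁₂ *ᵥ (x ∘ Sum.inr) = 0 := by
        funext i; exact congrFun hx0 (Sum.inl i)
      have hBx2 : (-D₁₂ᵀ) *ᵥ (x ∘ Sum.inl) + D₂₂ *ᵥ (x ∘ Sum.inr) = 0 := by
        funext j; exact congrFun hx0 (Sum.inr j)
      set y : Fin m₁ ⊕ (Fin m₂ ⊕ Fin m₃) → ℝ :=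
        Sum.elim (x ∘ Sum.inl) (Sum.elim (x ∘ Sum.inr) fun _ => 0) with hy
      have hMy : (Uᵀ * (S + N) * U) *ᵥ y = 0 := by
        rw [hMeq, Matrix.fromBlocks_mulVec]
        have hyl : y ∘ Sum.inl = x ∘ Sum.inl := rfl
        have hyr : y ∘ Sum.inr = Sum.elim (x ∘ Sum.inr) (fun _ : Fin m₃ => (0:ℝ)) := rfl
        rw [hyl, hyr]
        have htop : D₁₁ *ᵥ (x ∘ Sum.inl)
            + fromCols D₁₂ 0 *ᵥ Sum.elim (x ∘ Sum.inr) (fun _ : Fin m₃ => (0:ℝ)) = 0 := by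
          rw [fromCols_mulVec_sumElim, Matrix.zero_mulVec, add_zero]
          exact hBx1
        have hbot : fromRows (-D₁₂ᵀ) (0 : Matrix (Fin m₃) (Fin m₁) ℝ) *ᵥ (x ∘ Sum.inl)
            + fromBlocks D₂₂ 0 0 0 *ᵥ Sum.elim (x ∘ Sum.inr) (fun _ : Fin m₃ => (0:ℝ)) = 0 := by
          rw [Matrix.fromRows_mulVec, Matrix.fromBlocks_mulVec]
          funext c
          rcases c with j | k
          · have : ((-D₁₂ᵀ) *ᵥ (x ∘ Sum.inl)) j + (D₂₂ *ᵥ (x ∘ Sum.inr)) j = 0 := by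
              simpa using congrFun hBx2 j
            simpa [Sum.elim_comp_inl, Sum.elim_comp_inr] using this
          · simp [Sum.elim_comp_inl, Sum.elim_comp_inr]
        rw [htop, hbot]
        funext c; rcases c with i | c <;> rfl
      -- transport to the kernel of D
      have hDUy : (S + N) *ᵥ (U *ᵥ y) = 0 := by
        have h1 : Uᵀ *ᵥ ((S + N) *ᵥ (U *ᵥ y)) = 0 := by
          rw [Matrix.mulVec_mulVec, Matrix.mulVec_mulVec]
          exact hMy
        have h2 : U *ᵥ (Uᵀ *ᵥ ((S + N) *ᵥ (U *ᵥ y))) = (S + N) *ᵥ (U *ᵥ y) := by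
          rw [Matrix.mulVec_mulVec, hUUt, Matrix.one_mulVec]
        rw [h1, Matrix.mulVec_zero] at h2
        exact h2.symm
      set z : EuclideanSpace ℝ (Fin m) := (WithLp.equiv 2 (Fin m → ℝ)).symm (U *ᵥ y) with hz
      have hzKD : z ∈ KD := by
        rw [memker]
        simpa [hz] using hDUy
      have hUty : Uᵀ *ᵥ (U *ᵥ y) = y := by
        rw [Matrix.mulVec_mulVec, hUtU, Matrix.one_mulVec]
      have hcomp : ∀ a, y a = (inner ℝ (u a) z : ℝ) := by
        intro a
        have h1 : (Uᵀ *ᵥ (U *ᵥ y)) a = v a ⬝ᵥ (U *ᵥ y) := by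
          simp [Matrix.mulVec, dotProduct, hU_def]
        rw [← hUty]
        rw [h1, EuclideanSpace.inner_eq_star_dotProduct]
        simp [hz, hv_def]
        exact dotProduct_comm _ _
      have hy0 : ∀ a, (∃ i, a = Sum.inl i) ∨ (∃ j, a = Sum.inr (Sum.inl j)) → y a = 0 := by
        rintro a (⟨i, rfl⟩ | ⟨j, rfl⟩)
        · rw [hcomp]
          have : z ∈ KSᗮᗮ := Submodule.le_orthogonal_orthogonal KS (hKDS hzKD)
          exact hcross _ _ KSᗮ (hmem1 i) this
        · rw [hcomp]
          have : z ∈ KDᗮᗮ := Submodule.le_orthogonal_orthogonal KD hzKD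
          exact hcross _ _ KDᗮ (hmem2 j).1 this
      funext c
      rcases c with i | j
      · simpa [hy] using hy0 (Sum.inl i) (Or.inl ⟨i, rfl⟩)
      · simpa [hy] using hy0 (Sum.inr (Sum.inl j)) (Or.inr ⟨j, rfl⟩)
    intro a b hab
    have : (fromBlocks D₁₁ D₁₂ (-D₁₂ᵀ) D₂₂) *ᵥ (a - b) = 0 := by
      have := Matrix.mulVecLin (fromBlocks D₁₁ D₁₂ (-D₁₂ᵀ) D₂₂) |>.map_sub a b
      simp only [Matrix.mulVecLin_apply] at this
      rw [this, hab, sub_self]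
    have h0 := hker _ this
    have := sub_eq_zero.mp h0
    exact this
  exact ⟨U, D₁₁, D₁₂, D₂₂, S₁₁, hUtU, hUUt, hD22skew, hBunit, hS11posdef, hMeq, hMSeq⟩
end

section
/- Consider a port-Hamiltonian descriptor system E ẋ = (J−R)x + (G−P)u, y = (G+P)ᵀx + (S+N)u with E = Eᵀ ≥ 0, [[J, G],[−Gᵀ, N]] skew-symmetric, and W = [[R, P],[Pᵀ, S]] ≥ 0. There exists F ∈ ℝᵐˣⁿ such that the closed-loop dissipation matrix W̃ = [[R̃, P̃],[P̃ᵀ, S]] with R̃ = R − ½[(G−P)F + Fᵀ(G−P)ᵀ] and P̃ = P + ½Fᵀ(S+N)ᵀ is positive definite (i.e., the closed-loop system is strictly passive) if and only if S > 0 and R + ½(G−P)(S+N)⁻¹(G+P)ᵀ + ½(G+P)(S+N)⁻ᵀ(G−P)ᵀ > 0. -/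
open Matrix

section Aux

variable {p q : Type*} [Fintype p] [Fintype q] [DecidableEq p] [DecidableEq q]

omit [DecidableEq p] [DecidableEq q] in
lemma posDef_toBlocks₂₂ {A : Matrix p p ℝ} {B : Matrix p q ℝ} {C : Matrix q p ℝ} {D : Matrix q q ℝ}
    (h : (fromBlocks A B C D).PosDef) : D.PosDef := by
  refine posDef_iff_dotProduct_mulVec.mpr ⟨?_, ?_⟩
  · simpa [Matrix.IsHermitian, fromBlocks_conjTranspose, fromBlocks_transpose] using congrArg Matrix.toBlocks₂₂ h.1
  · intro x hx
    have hv : Sum.elim (0 : p → ℝ) x ≠ 0 := by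
      intro hc; exact hx (funext fun i => congrFun hc (Sum.inr i))
    have h2 := h.dotProduct_mulVec_pos hv
    simpa [fromBlocks_mulVec, sumElim_dotProduct_sumElim] using h2

omit [DecidableEq p] in
open scoped Matrix in
lemma posDef_fromBlocks₂₂_iff {A : Matrix p p ℝ} (B : Matrix p q ℝ) {D : Matrix q q ℝ}
    (hD : D.PosDef) [Invertible D] :
    (fromBlocks A B Bᵀ D).PosDef ↔ (A - B * D⁻¹ * Bᵀ).PosDef := by
  have hBH : Bᴴ = Bᵀ := conjTranspose_eq_transpose_of_trivial B
  rw [← hBH]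
  rw [posDef_iff_dotProduct_mulVec, posDef_iff_dotProduct_mulVec]
  constructor
  · rintro ⟨h1, h2⟩
    refine ⟨(IsHermitian.fromBlocks₂₂ A B hD.1).mp h1, fun x hx => ?_⟩
    have key := schur_complement_eq₂₂ A B x (-((D⁻¹ * Bᴴ) *ᵥ x)) hD.1
    have hv : (Sum.elim x (-((D⁻¹ * Bᴴ) *ᵥ x))) ≠ 0 := by
      intro hc; exact hx (funext fun i => congrFun hc (Sum.inl i))
    have h3 := h2 hv
    rw [dotProduct_mulVec] at h3
    rw [key] at h3
    simpa [dotProduct_mulVec] using h3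
  · rintro ⟨h1, h2⟩
    refine ⟨(IsHermitian.fromBlocks₂₂ A B hD.1).mpr h1, fun z hz => ?_⟩
    have key := schur_complement_eq₂₂ A B (z ∘ Sum.inl) (z ∘ Sum.inr) hD.1
    rw [Sum.elim_comp_inl_inr] at key
    rw [dotProduct_mulVec, key]
    by_cases hx : z ∘ Sum.inl = 0
    · have hy : z ∘ Sum.inr ≠ 0 := by
        intro hc; apply hz; funext i; cases i with
        | inl i => exact congrFun hx i
        | inr i => exact congrFun hc i
      apply add_pos_of_pos_of_nonneg
      · have := hD.dotProduct_mulVec_pos (x := (D⁻¹ * Bᴴ) *ᵥ (z ∘ Sum.inl) + z ∘ Sum.inr) (by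
          rw [hx, mulVec_zero, zero_add]; exact hy)
        rwa [dotProduct_mulVec] at this
      · rw [hx]; simp
    · apply add_pos_of_nonneg_of_pos
      · have := hD.posSemidef.dotProduct_mulVec_nonneg ((D⁻¹ * Bᴴ) *ᵥ (z ∘ Sum.inl) + z ∘ Sum.inr)
        rwa [dotProduct_mulVec] at this
      · have := h2 hx
        rwa [dotProduct_mulVec] at this

end Aux

lemma key_identity {n m : ℕ} (R : Matrix (Fin n) (Fin n) ℝ) (G P : Matrix (Fin n) (Fin m) ℝ)
    (A S : Matrix (Fin m) (Fin m) ℝ) (F : Matrix (Fin m) (Fin n) ℝ)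
    (h1 : A⁻¹ * A = 1) (h2 : A * A⁻¹ = 1) (h3 : S⁻¹ * S = 1) (h4 : S * S⁻¹ = 1)
    (hSsym : Sᵀ = S) (hAS : A + Aᵀ = (2:ℝ) • S) :
    (R - (1/2:ℝ) • ((G-P)*F + Fᵀ*(G-P)ᵀ))
      - ((P + (1/2:ℝ)•Fᵀ*Aᵀ) * S⁻¹ * (P + (1/2:ℝ)•Fᵀ*Aᵀ)ᵀ)
      + ((G-P)*A⁻¹*S + (P + (1/2:ℝ)•Fᵀ*Aᵀ)) * S⁻¹ * ((G-P)*A⁻¹*S + (P + (1/2:ℝ)•Fᵀ*Aᵀ))ᵀ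
    = R + (1/2:ℝ)•((G-P)*A⁻¹*(G+P)ᵀ) + (1/2:ℝ)•((G+P)*(A⁻¹)ᵀ*(G-P)ᵀ) := by
  have hAiT : Aᵀ * (A⁻¹)ᵀ = 1 := by rw [← transpose_mul, h1, transpose_one]
  have hAiT' : (A⁻¹)ᵀ * Aᵀ = 1 := by rw [← transpose_mul, h2, transpose_one]
  set B : Matrix (Fin n) (Fin m) ℝ := P + (1/2:ℝ)•Fᵀ*Aᵀ with hB
  set C : Matrix (Fin n) (Fin m) ℝ := (G-P)*A⁻¹ with hC
  have hBt : Bᵀ = Pᵀ + (1/2:ℝ) • (A*F) := by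
    rw [hB, transpose_add, transpose_mul, transpose_smul, transpose_transpose, transpose_transpose,
      Matrix.mul_smul]
  have hCt : Cᵀ = (A⁻¹)ᵀ * (G-P)ᵀ := by rw [hC, transpose_mul]
  have expand : (C*S + B) * S⁻¹ * (C*S + B)ᵀ
      = C*S*Cᵀ + C*Bᵀ + B*Cᵀ + B*S⁻¹*Bᵀ := by
    rw [transpose_add, transpose_mul, hSsym]
    rw [Matrix.add_mul, Matrix.add_mul, Matrix.mul_add, Matrix.mul_add]
    have c1 : C*S*S⁻¹ = C := by rw [Matrix.mul_assoc, h4, Matrix.mul_one]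
    have c2 : B*S⁻¹*(S*Cᵀ) = B*Cᵀ := by
      rw [Matrix.mul_assoc, ← Matrix.mul_assoc S⁻¹ S Cᵀ, h3, Matrix.one_mul]
    rw [c1, c2, ← Matrix.mul_assoc C S Cᵀ]
    abel
  have hCA : C * A = G - P := by rw [hC, Matrix.mul_assoc, h1, Matrix.mul_one]
  have hCBt : C * Bᵀ = C * Pᵀ + (1/2:ℝ) • ((G-P)*F) := by
    rw [hBt, Matrix.mul_add, Matrix.mul_smul, ← Matrix.mul_assoc, hCA]
  have hBCt : B * Cᵀ = P * Cᵀ + (1/2:ℝ) • (Fᵀ*(G-P)ᵀ) := by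
    rw [hCt, hB, Matrix.add_mul, Matrix.smul_mul, Matrix.smul_mul]
    congr 1
    rw [Matrix.mul_assoc Fᵀ, ← Matrix.mul_assoc Aᵀ, hAiT, Matrix.one_mul]
  have hCSCt : C*S*Cᵀ = (1/2:ℝ) • ((G-P)*(A⁻¹)ᵀ*(G-P)ᵀ) + (1/2:ℝ) • ((G-P)*A⁻¹*(G-P)ᵀ) := by
    have hS : S = (1/2:ℝ) • A + (1/2:ℝ) • Aᵀ := by
      have h := congrArg (fun M => (1/2:ℝ) • M) hAS
      simpa [smul_add, smul_smul] using h.symm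
    rw [hS, Matrix.mul_add, Matrix.add_mul, Matrix.mul_smul, Matrix.mul_smul,
      Matrix.smul_mul, Matrix.smul_mul, hCA]
    rw [hCt]
    congr 1
    · rw [← Matrix.mul_assoc]
    · rw [Matrix.mul_assoc C Aᵀ, ← Matrix.mul_assoc Aᵀ, hAiT, Matrix.one_mul, hC]
  have hGP : (G+P)ᵀ = (G-P)ᵀ + (2:ℝ) • Pᵀ := by
    rw [transpose_add, transpose_sub]; module
  have hGP2 : G + P = (G - P) + (2:ℝ) • P := by module
  rw [expand, hCBt, hBCt, hCSCt, hC, hCt, hGP, hGP2]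
  simp only [Matrix.add_mul, Matrix.mul_add, Matrix.smul_mul, Matrix.mul_smul, smul_add,
    smul_smul, Matrix.mul_assoc]
  module

/-- Theorem 3.2: existence of a state feedback making the closed-loop pH
descriptor system strictly passive. -/
theorem ph_feedback_strict_passivity_iff
    {n m : ℕ}
    (E J R : Matrix (Fin n) (Fin n) ℝ)
    (G P : Matrix (Fin n) (Fin m) ℝ)
    (S N : Matrix (Fin m) (Fin m) ℝ)
    (hE : E.PosSemidef)
    (hskew : (fromBlocks J G (-Gᵀ) N)ᵀ = -(fromBlocks J G (-Gᵀ) N))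
    (hW : (fromBlocks R P Pᵀ S).PosSemidef) :
    (∃ F : Matrix (Fin m) (Fin n) ℝ,
      (fromBlocks
          (R - (1 / 2 : ℝ) • ((G - P) * F + Fᵀ * (G - P)ᵀ))
          (P + (1 / 2 : ℝ) • Fᵀ * (S + N)ᵀ)
          (P + (1 / 2 : ℝ) • Fᵀ * (S + N)ᵀ)ᵀ
          S).PosDef)
    ↔
    (S.PosDef ∧
      (R + (1 / 2 : ℝ) • ((G - P) * (S + N)⁻¹ * (G + P)ᵀ)
         + (1 / 2 : ℝ) • ((G + P) * ((S + N)⁻¹)ᵀ * (G - P)ᵀ)).PosDef) := by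
  -- symmetry facts
  have hSsym : Sᵀ = S := by
    simpa [fromBlocks_conjTranspose, fromBlocks_transpose] using congrArg Matrix.toBlocks₂₂ hW.1
  have hNsk : Nᵀ = -N := by
    simpa [fromBlocks_transpose, fromBlocks_neg] using congrArg Matrix.toBlocks₂₂ hskew
  have hAS : (S + N) + (S + N)ᵀ = (2:ℝ) • S := by
    rw [transpose_add, hSsym, hNsk]; module
  -- invertibility of S + N given S posdef
  have hSNunit : ∀ (hS : S.PosDef), IsUnit (S + N) := by
    intro hS
    rw [← Matrix.mulVec_injective_iff_isUnit]
    intro a b hab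
    have key : (S + N) *ᵥ (a - b) = 0 := by
      rw [mulVec_sub, hab, sub_self]
    by_contra hne
    have hx0 : a - b ≠ 0 := fun hc => hne (by rwa [sub_eq_zero] at hc)
    set x := a - b
    have hpos : 0 < x ⬝ᵥ S *ᵥ x := by simpa using hS.dotProduct_mulVec_pos hx0
    have hzero : x ⬝ᵥ ((2:ℝ) • S) *ᵥ x = 0 := by
      rw [← hAS, add_mulVec, key, zero_add, mulVec_transpose, dotProduct_comm,
        ← dotProduct_mulVec, key, dotProduct_zero]
    rw [smul_mulVec, dotProduct_smul, smul_eq_mul] at hzero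
    linarith
  constructor
  · rintro ⟨F, hF⟩
    have hS : S.PosDef := posDef_toBlocks₂₂ hF
    refine ⟨hS, ?_⟩
    haveI : Invertible S := S.invertibleOfIsUnitDet ((Matrix.isUnit_iff_isUnit_det S).mp hS.isUnit)
    have hSN := hSNunit hS
    have h1 : (S+N)⁻¹ * (S+N) = 1 :=
      Matrix.nonsing_inv_mul _ ((Matrix.isUnit_iff_isUnit_det _).mp hSN)
    have h2 : (S+N) * (S+N)⁻¹ = 1 :=
      Matrix.mul_nonsing_inv _ ((Matrix.isUnit_iff_isUnit_det _).mp hSN)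
    have h3 : S⁻¹ * S = 1 :=
      Matrix.nonsing_inv_mul _ ((Matrix.isUnit_iff_isUnit_det _).mp hS.isUnit)
    have h4 : S * S⁻¹ = 1 :=
      Matrix.mul_nonsing_inv _ ((Matrix.isUnit_iff_isUnit_det _).mp hS.isUnit)
    have hschur := (posDef_fromBlocks₂₂_iff _ hS).mp hF
    set Q : Matrix (Fin n) (Fin m) ℝ :=
      (G-P)*(S+N)⁻¹*S + (P + (1/2:ℝ)•Fᵀ*(S+N)ᵀ) with hQdef
    have hQ : (Q * S⁻¹ * Qᵀ).PosSemidef := by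
      have := (hS.posSemidef.inv).mul_mul_conjTranspose_same Q
      rwa [conjTranspose_eq_transpose_of_trivial] at this
    have hsum := hschur.add_posSemidef hQ
    rwa [key_identity R G P (S+N) S F h1 h2 h3 h4 hSsym hAS] at hsum
  · rintro ⟨hS, hT⟩
    haveI : Invertible S := S.invertibleOfIsUnitDet ((Matrix.isUnit_iff_isUnit_det S).mp hS.isUnit)
    have hSN := hSNunit hS
    have h1 : (S+N)⁻¹ * (S+N) = 1 :=
      Matrix.nonsing_inv_mul _ ((Matrix.isUnit_iff_isUnit_det _).mp hSN)
    have h2 : (S+N) * (S+N)⁻¹ = 1 :=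
      Matrix.mul_nonsing_inv _ ((Matrix.isUnit_iff_isUnit_det _).mp hSN)
    have h3 : S⁻¹ * S = 1 :=
      Matrix.nonsing_inv_mul _ ((Matrix.isUnit_iff_isUnit_det _).mp hS.isUnit)
    have h4 : S * S⁻¹ = 1 :=
      Matrix.mul_nonsing_inv _ ((Matrix.isUnit_iff_isUnit_det _).mp hS.isUnit)
    have hAiT' : ((S+N)⁻¹)ᵀ * (S+N)ᵀ = 1 := by rw [← transpose_mul, h2, transpose_one]
    set F₀ : Matrix (Fin m) (Fin n) ℝ :=
      -((2:ℝ) • ((S+N)⁻¹ * (P + (G-P)*(S+N)⁻¹*S)ᵀ)) with hF₀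
    refine ⟨F₀, (posDef_fromBlocks₂₂_iff _ hS).mpr ?_⟩
    have e : (1/2:ℝ)•F₀ᵀ = -((P + (G-P)*(S+N)⁻¹*S) * ((S+N)⁻¹)ᵀ) := by
      rw [hF₀, transpose_neg, transpose_smul, transpose_mul, transpose_transpose, smul_neg,
        smul_smul]
      norm_num
    have hQ0 : (G-P)*(S+N)⁻¹*S + (P + (1/2:ℝ)•F₀ᵀ*(S+N)ᵀ) = 0 := by
      rw [e, Matrix.neg_mul, Matrix.mul_assoc _ ((S+N)⁻¹)ᵀ (S+N)ᵀ, hAiT', Matrix.mul_one]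
      abel
    have hkey := key_identity R G P (S+N) S F₀ h1 h2 h3 h4 hSsym hAS
    rw [hQ0] at hkey
    simp only [Matrix.zero_mul, transpose_zero, Matrix.mul_zero, add_zero] at hkey
    rw [show (1 / 2 : ℝ) = (1/2:ℝ) from rfl] at hT
    rw [hkey]
    exact hT
end

section
/- Let D ∈ ℝᵐˣᵐ with symmetric part S = ½(D + Dᵀ) positive definite, let B ∈ ℝⁿˣᵐ, P ∈ ℝⁿˣᵐ, R ∈ ℝⁿˣⁿ symmetric. For F ∈ ℝᵐˣⁿ, the block matrix [[R − ½(BF + FᵀBᵀ), P + ½FᵀDᵀ],[Pᵀ + ½DF, S]] is positive definite for SOME F if and only if S > 0 and R + BD⁻¹Pᵀ + PD⁻ᵀBᵀ + BD⁻¹SD⁻ᵀBᵀ > 0; moreover, in the affirmative case F = −2D⁻¹(Pᵀ + SD⁻ᵀBᵀ) is such a choice. -/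
open Matrix

lemma my_posDef_fromBlocks₂₂ {m n : ℕ} {A : Matrix (Fin n) (Fin n) ℝ}
    (B : Matrix (Fin n) (Fin m) ℝ) {D : Matrix (Fin m) (Fin m) ℝ}
    (hD : D.PosDef) [Invertible D] :
    (fromBlocks A B Bᴴ D).PosDef ↔ (A - B * D⁻¹ * Bᴴ).PosDef := by
  rw [posDef_iff_dotProduct_mulVec, posDef_iff_dotProduct_mulVec, IsHermitian.fromBlocks₂₂ _ _ hD.1]
  refine and_congr_right fun hherm => ⟨fun h x hx => ?_, fun h z hz => ?_⟩
  · have key := schur_complement_eq₂₂ A B x (-((D⁻¹ * Bᴴ) *ᵥ x)) hD.1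
    have hz : (Sum.elim x (-((D⁻¹ * Bᴴ) *ᵥ x)) : Fin n ⊕ Fin m → ℝ) ≠ 0 := by
      intro hc
      apply hx
      funext i
      exact congrFun hc (Sum.inl i)
    have := h hz
    rw [dotProduct_mulVec, key, add_neg_cancel, star_zero, zero_vecMul, zero_dotProduct,
      zero_add, ← dotProduct_mulVec] at this
    exact this
  · obtain ⟨x, y, rfl⟩ : ∃ x y, z = Sum.elim x y :=
      ⟨z ∘ Sum.inl, z ∘ Sum.inr, by funext i; cases i <;> rfl⟩
    rw [dotProduct_mulVec, schur_complement_eq₂₂ A B x y hD.1]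
    by_cases hx : x = 0
    · have hy : y ≠ 0 := by
        intro hy; apply hz; funext i; cases i with
        | inl i => simp [hx]
        | inr i => simp [hy]
      subst hx
      have h1 : ((D⁻¹ * Bᴴ) *ᵥ (0 : Fin n → ℝ) + y) = y := by simp
      rw [h1]
      simp only [star_zero, zero_vecMul, zero_dotProduct, add_zero]
      rw [← dotProduct_mulVec]
      exact (posDef_iff_dotProduct_mulVec.mp hD).2 hy
    · have t1 : (0:ℝ) ≤ star ((D⁻¹ * Bᴴ) *ᵥ x + y) ᵥ* D ⬝ᵥ ((D⁻¹ * Bᴴ) *ᵥ x + y) := by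
        rw [← dotProduct_mulVec]
        exact (posSemidef_iff_dotProduct_mulVec.mp hD.posSemidef).2 _
      have t2 : (0:ℝ) < star x ᵥ* (A - B * D⁻¹ * Bᴴ) ⬝ᵥ x := by
        rw [← dotProduct_mulVec]; exact h hx
      linarith

/-- Key equivalence behind Theorem 3.2: existence of F making the closed-loop
dissipation matrix positive definite, with an explicit choice of F. -/
theorem strict_passivity_feedback_characterization
    {n m : ℕ}
    (D : Matrix (Fin m) (Fin m) ℝ)
    (S : Matrix (Fin m) (Fin m) ℝ)
    (hSdef : S = (1 / 2 : ℝ) • (D + Dᵀ))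
    (hSpd : S.PosDef)
    (B P : Matrix (Fin n) (Fin m) ℝ)
    (R : Matrix (Fin n) (Fin n) ℝ) (hR : Rᵀ = R) :
    ((∃ F : Matrix (Fin m) (Fin n) ℝ,
      (fromBlocks
          (R - (1 / 2 : ℝ) • (B * F + Fᵀ * Bᵀ))
          (P + (1 / 2 : ℝ) • Fᵀ * Dᵀ)
          (Pᵀ + (1 / 2 : ℝ) • D * F)
          S).PosDef)
    ↔
    (S.PosDef ∧
      (R + B * D⁻¹ * Pᵀ + P * (D⁻¹)ᵀ * Bᵀ + B * D⁻¹ * S * (D⁻¹)ᵀ * Bᵀ).PosDef))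
    ∧
    ((S.PosDef ∧
      (R + B * D⁻¹ * Pᵀ + P * (D⁻¹)ᵀ * Bᵀ + B * D⁻¹ * S * (D⁻¹)ᵀ * Bᵀ).PosDef) →
      (fromBlocks
          (R - (1 / 2 : ℝ) • (B * ((-2 : ℝ) • (D⁻¹ * (Pᵀ + S * (D⁻¹)ᵀ * Bᵀ)))
            + ((-2 : ℝ) • (D⁻¹ * (Pᵀ + S * (D⁻¹)ᵀ * Bᵀ)))ᵀ * Bᵀ))
          (P + (1 / 2 : ℝ) • ((-2 : ℝ) • (D⁻¹ * (Pᵀ + S * (D⁻¹)ᵀ * Bᵀ)))ᵀ * Dᵀ)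
          (Pᵀ + (1 / 2 : ℝ) • D * ((-2 : ℝ) • (D⁻¹ * (Pᵀ + S * (D⁻¹)ᵀ * Bᵀ))))
          S).PosDef) := by
  -- Symmetry of S
  have hS : Sᵀ = S := by
    rw [hSdef]; rw [Matrix.transpose_smul, Matrix.transpose_add, Matrix.transpose_transpose,
      add_comm]
  -- D is invertible
  have hDdet : IsUnit D.det := by
    rw [isUnit_iff_ne_zero]
    intro hdet
    obtain ⟨v, hv, hDv⟩ := (Matrix.exists_mulVec_eq_zero_iff).mpr hdet
    have hpos := (posDef_iff_dotProduct_mulVec.mp hSpd).2 hv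
    rw [hSdef, show (star v) = v from star_trivial v] at hpos
    rw [Matrix.smul_mulVec, Matrix.add_mulVec, hDv, zero_add,
      dotProduct_smul, Matrix.dotProduct_mulVec, Matrix.vecMul_transpose, hDv] at hpos
    simp at hpos
  have hSdet : IsUnit S.det := isUnit_iff_ne_zero.mpr hSpd.det_pos.ne'
  haveI : Invertible S := S.invertibleOfIsUnitDet hSdet
  have hDT : IsUnit Dᵀ.det := by rwa [Matrix.det_transpose]
  have e1 : D⁻¹ * D = 1 := Matrix.nonsing_inv_mul _ hDdet
  have e2 : D * D⁻¹ = 1 := Matrix.mul_nonsing_inv _ hDdet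
  have e3 : Dᵀ⁻¹ * Dᵀ = 1 := Matrix.nonsing_inv_mul _ hDT
  have e4 : Dᵀ * Dᵀ⁻¹ = 1 := Matrix.mul_nonsing_inv _ hDT
  have e5 : S⁻¹ * S = 1 := Matrix.nonsing_inv_mul _ hSdet
  have e6 : S * S⁻¹ = 1 := Matrix.mul_nonsing_inv _ hSdet
  have c1 : ∀ (X : Matrix (Fin m) (Fin n) ℝ), D⁻¹ * (D * X) = X :=
    fun X => Matrix.nonsing_inv_mul_cancel_left _ _ hDdet
  have c2 : ∀ (X : Matrix (Fin m) (Fin n) ℝ), D * (D⁻¹ * X) = X :=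
    fun X => Matrix.mul_nonsing_inv_cancel_left _ _ hDdet
  have c3 : ∀ (X : Matrix (Fin m) (Fin n) ℝ), Dᵀ⁻¹ * (Dᵀ * X) = X :=
    fun X => Matrix.nonsing_inv_mul_cancel_left _ _ hDT
  have c4 : ∀ (X : Matrix (Fin m) (Fin n) ℝ), Dᵀ * (Dᵀ⁻¹ * X) = X :=
    fun X => Matrix.mul_nonsing_inv_cancel_left _ _ hDT
  have c5 : ∀ (X : Matrix (Fin m) (Fin n) ℝ), S⁻¹ * (S * X) = X :=
    fun X => Matrix.nonsing_inv_mul_cancel_left _ _ hSdet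
  have c6 : ∀ (X : Matrix (Fin m) (Fin n) ℝ), S * (S⁻¹ * X) = X :=
    fun X => Matrix.mul_nonsing_inv_cancel_left _ _ hSdet
  set F₀ : Matrix (Fin m) (Fin n) ℝ := (-2 : ℝ) • (D⁻¹ * (Pᵀ + S * (D⁻¹)ᵀ * Bᵀ)) with hF₀
  set M : Matrix (Fin n) (Fin n) ℝ :=
    R + B * D⁻¹ * Pᵀ + P * (D⁻¹)ᵀ * Bᵀ + B * D⁻¹ * S * (D⁻¹)ᵀ * Bᵀ with hM
  -- the "moreover" part
  have key : (S.PosDef ∧ M.PosDef) →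
      (fromBlocks
          (R - (1 / 2 : ℝ) • (B * F₀ + F₀ᵀ * Bᵀ))
          (P + (1 / 2 : ℝ) • F₀ᵀ * Dᵀ)
          (Pᵀ + (1 / 2 : ℝ) • D * F₀)
          S).PosDef := by
    rintro ⟨-, hMpd⟩
    have hb12 : P + (1 / 2 : ℝ) • F₀ᵀ * Dᵀ = -(B * D⁻¹ * S) := by
      rw [hF₀]
      simp only [Matrix.transpose_nonsing_inv, Matrix.transpose_smul, Matrix.transpose_mul,
        Matrix.transpose_add, Matrix.transpose_transpose, hS,
        Matrix.smul_mul, Matrix.mul_smul, Matrix.add_mul, Matrix.mul_add, Matrix.mul_assoc,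
        e1, e2, e3, e4, e5, e6, c1, c2, c3, c4, c5, c6, Matrix.mul_one, Matrix.one_mul, smul_smul]
      norm_num
    have hb21 : Pᵀ + (1 / 2 : ℝ) • D * F₀ = (-(B * D⁻¹ * S))ᴴ := by
      rw [hF₀]
      simp only [Matrix.conjTranspose_eq_transpose_of_trivial, Matrix.transpose_neg,
        Matrix.transpose_nonsing_inv, Matrix.transpose_smul, Matrix.transpose_mul,
        Matrix.transpose_add, Matrix.transpose_transpose, hS,
        Matrix.smul_mul, Matrix.mul_smul, Matrix.add_mul, Matrix.mul_add, Matrix.mul_assoc,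
        e1, e2, e3, e4, e5, e6, c1, c2, c3, c4, c5, c6, Matrix.mul_one, Matrix.one_mul, smul_smul]
      norm_num
      module
    rw [hb12, hb21, my_posDef_fromBlocks₂₂ _ hSpd]
    have hschur : R - (1 / 2 : ℝ) • (B * F₀ + F₀ᵀ * Bᵀ)
        - -(B * D⁻¹ * S) * S⁻¹ * (-(B * D⁻¹ * S))ᴴ = M := by
      rw [hF₀, hM]
      simp only [Matrix.conjTranspose_eq_transpose_of_trivial, Matrix.transpose_neg,
        Matrix.transpose_nonsing_inv, Matrix.transpose_smul, Matrix.transpose_mul,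
        Matrix.transpose_add, Matrix.transpose_transpose, hS,
        Matrix.smul_mul, Matrix.mul_smul, Matrix.add_mul, Matrix.mul_add,
        Matrix.sub_mul, Matrix.mul_sub, Matrix.neg_mul, Matrix.mul_neg, Matrix.mul_assoc,
        e1, e2, e3, e4, e5, e6, c1, c2, c3, c4, c5, c6, Matrix.mul_one, Matrix.one_mul, smul_smul]
      norm_num
      module
    rwa [hschur]
  refine ⟨⟨?_, fun h => ⟨F₀, key h⟩⟩, key⟩
  rintro ⟨F, hF⟩
  refine ⟨hSpd, ?_⟩
  have hcb : Pᵀ + (1 / 2 : ℝ) • D * F = (P + (1 / 2 : ℝ) • Fᵀ * Dᵀ)ᴴ := by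
    simp only [Matrix.conjTranspose_eq_transpose_of_trivial, Matrix.transpose_add,
      Matrix.transpose_mul, Matrix.transpose_smul, Matrix.transpose_transpose,
      Matrix.smul_mul, Matrix.mul_smul]
  rw [hcb] at hF
  have hschur := (my_posDef_fromBlocks₂₂ _ hSpd).mp hF
  have hkey : M = (R - (1 / 2 : ℝ) • (B * F + Fᵀ * Bᵀ)
      - (P + (1 / 2 : ℝ) • Fᵀ * Dᵀ) * S⁻¹ * (P + (1 / 2 : ℝ) • Fᵀ * Dᵀ)ᴴ)
      + ((P + (1 / 2 : ℝ) • Fᵀ * Dᵀ) + B * D⁻¹ * S) * S⁻¹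
        * ((P + (1 / 2 : ℝ) • Fᵀ * Dᵀ) + B * D⁻¹ * S)ᴴ := by
    rw [hM]
    simp only [Matrix.conjTranspose_eq_transpose_of_trivial, Matrix.transpose_neg,
      Matrix.transpose_nonsing_inv, Matrix.transpose_smul, Matrix.transpose_mul,
      Matrix.transpose_add, Matrix.transpose_transpose, hS,
      Matrix.smul_mul, Matrix.mul_smul, Matrix.add_mul, Matrix.mul_add,
      Matrix.sub_mul, Matrix.mul_sub, Matrix.neg_mul, Matrix.mul_neg, Matrix.mul_assoc,
      e1, e2, e3, e4, e5, e6, c1, c2, c3, c4, c5, c6, Matrix.mul_one, Matrix.one_mul, smul_smul]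
    norm_num
    module
  rw [hkey]
  exact hschur.add_posSemidef ((hSpd.inv.posSemidef).mul_mul_conjTranspose_same _)
end
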